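/- arXiv:1206.6597 — 7 statements merged into one kernel-verified Lean document; each statement's English description precedes it below -/
import Mathlib

section
/- A unimodular lattice Λ ⊆ ℝ² is horizontally short (i.e., contains a nonzero horizontal vector (a,0) with 0 < a ≤ 1) if and only if there exists (a,b) ∈ Ω with Λ = Λ_{a,b}. -/
open MeasureTheory

noncomputable section

/-- The Farey triangle `Ω = {(a,b) : 0 < a ≤ 1, 0 < b ≤ 1, a + b > 1}`. -/
def FareyTriangle : Set (ℝ × ℝ) :=
  {p | 0 < p.1 ∧ p.1 ≤ 1 ∧ 0 < p.2 ∧ p.2 ≤ 1 ∧ 1 < p.1 + p.2}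

/-- The lattice `g·ℤ² ⊆ ℝ²`. -/
def latticeOf (g : Matrix (Fin 2) (Fin 2) ℝ) : Set (Fin 2 → ℝ) :=
  {v | ∃ m : Fin 2 → ℤ, v = g.mulVec fun i => (m i : ℝ)}

/-- A unimodular lattice is the image of `ℤ²` under a matrix of determinant one. -/
def IsUnimodularLattice (Λ : Set (Fin 2 → ℝ)) : Prop :=
  ∃ g : Matrix (Fin 2) (Fin 2) ℝ, g.det = 1 ∧ Λ = latticeOf g

/-- A lattice is horizontally short if it contains a vector `(a,0)` with `0 < a ≤ 1`. -/
def HorizontallyShort (Λ : Set (Fin 2 → ℝ)) : Prop :=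
  ∃ a : ℝ, 0 < a ∧ a ≤ 1 ∧ ![a, 0] ∈ Λ

/-- The matrix `p_{a,b} = [[a, b], [0, a⁻¹]]`. -/
def pMat (a b : ℝ) : Matrix (Fin 2) (Fin 2) ℝ := !![a, b; 0, a⁻¹]

lemma cast_mulVec (M : Matrix (Fin 2) (Fin 2) ℤ) (m : Fin 2 → ℤ) :
    (M.map (Int.cast : ℤ → ℝ)).mulVec (fun i => (m i : ℝ)) = fun i => ((M.mulVec m) i : ℝ) := by
  funext i
  simp [Matrix.mulVec, dotProduct, Fin.sum_univ_two, Matrix.map]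

/-- Right multiplication by an integer matrix of determinant 1 preserves the lattice. -/
lemma latticeOf_mul (g : Matrix (Fin 2) (Fin 2) ℝ) (M : Matrix (Fin 2) (Fin 2) ℤ)
    (h : M.det = 1) : latticeOf (g * M.map (Int.cast : ℤ → ℝ)) = latticeOf g := by
  have hMN : M * M.adjugate = 1 := by rw [Matrix.mul_adjugate, h, one_smul]
  have hcast : M.map (Int.cast : ℤ → ℝ) * M.adjugate.map (Int.cast : ℤ → ℝ) = 1 := by
    have h2 := Matrix.map_mul (L := M) (M := M.adjugate) (f := Int.castRingHom ℝ)
    rw [hMN] at h2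
    simpa using h2.symm
  ext v
  constructor
  · rintro ⟨m, rfl⟩
    exact ⟨M.mulVec m, by rw [← Matrix.mulVec_mulVec, cast_mulVec]⟩
  · rintro ⟨m, rfl⟩
    refine ⟨M.adjugate.mulVec m, ?_⟩
    have h1 : (fun i => ((M.adjugate.mulVec m) i : ℝ))
        = (M.adjugate.map (Int.cast : ℤ → ℝ)).mulVec (fun i => (m i : ℝ)) :=
      (cast_mulVec _ _).symm
    rw [h1, Matrix.mulVec_mulVec, mul_assoc, hcast, mul_one]

theorem horizontally_short_iff_farey_triangle (Λ : Set (Fin 2 → ℝ))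
    (hΛ : IsUnimodularLattice Λ) :
    HorizontallyShort Λ ↔
      ∃ a b : ℝ, (a, b) ∈ FareyTriangle ∧ Λ = latticeOf (pMat a b) := by
  obtain ⟨g, hgdet, hgΛ⟩ := hΛ
  constructor
  · rintro ⟨a, ha0, ha1, haΛ⟩
    rw [hgΛ] at haΛ
    obtain ⟨m, hm⟩ := haΛ
    -- m ≠ 0
    have hmne : m ≠ 0 := by
      rintro rfl
      have : a = 0 := by
        have := congrFun hm 0
        simpa [Matrix.mulVec, dotProduct, Fin.sum_univ_two] using this
      exact ha0.ne' this
    have hgcd : 0 < Int.gcd (m 0) (m 1) := by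
      rw [Int.gcd_pos_iff]
      by_contra hc
      push_neg at hc
      exact hmne (by funext i; fin_cases i <;> simp [hc.1, hc.2])
    set d : ℤ := (Int.gcd (m 0) (m 1) : ℤ) with hd
    have hdpos : (0 : ℤ) < d := by rw [hd]; exact_mod_cast hgcd
    set p : ℤ := m 0 / d with hp
    set q : ℤ := m 1 / d with hq
    have hdp : d * p = m 0 := Int.mul_ediv_cancel' (Int.gcd_dvd_left _ _)
    have hdq : d * q = m 1 := Int.mul_ediv_cancel' (Int.gcd_dvd_right _ _)
    have hpq : Int.gcd p q = 1 := Int.gcd_div_gcd_div_gcd hgcd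
    set a' : ℝ := a / d with ha'
    have hdR : (0 : ℝ) < (d : ℝ) := by exact_mod_cast hdpos
    have ha'0 : 0 < a' := div_pos ha0 hdR
    have ha'1 : a' ≤ 1 := by
      rw [ha', div_le_one hdR]
      calc a ≤ 1 := ha1
        _ ≤ (d : ℝ) := by exact_mod_cast hdpos
    -- the primitive horizontal vector
    have hgm' : g.mulVec (fun i => ((![p, q] : Fin 2 → ℤ) i : ℝ)) = ![a', 0] := by
      have hmi : ∀ i, m i = d * (![p, q] : Fin 2 → ℤ) i := by
        intro i; fin_cases i
        · exact hdp.symm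
        · exact hdq.symm
      have h2 : (fun i => ((m i : ℝ))) = (d : ℝ) • fun i => ((![p, q] : Fin 2 → ℤ) i : ℝ) := by
        funext i
        simp only [Pi.smul_apply, smul_eq_mul]
        rw [hmi i]; push_cast; ring
      have h1 : ((d : ℝ) • g.mulVec fun i => ((![p, q] : Fin 2 → ℤ) i : ℝ)) = ![a, 0] := by
        rw [← Matrix.mulVec_smul, ← h2]; exact hm.symm
      have h3 : g.mulVec (fun i => ((![p, q] : Fin 2 → ℤ) i : ℝ)) = (d : ℝ)⁻¹ • ![a, 0] := by
        rw [← h1, ← smul_assoc, smul_eq_mul, inv_mul_cancel₀ hdR.ne', one_smul]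
      rw [h3]
      funext i
      fin_cases i <;> simp [ha', div_eq_inv_mul]
    -- complete (p, q) to an SL₂(ℤ) matrix
    set M : Matrix (Fin 2) (Fin 2) ℤ := !![p, -(Int.gcdB p q); q, Int.gcdA p q] with hM
    have hMdet : M.det = 1 := by
      have hb := Int.gcd_eq_gcd_ab p q
      rw [hpq] at hb
      rw [hM, Matrix.det_fin_two_of]
      push_cast at hb
      linarith
    set B : Matrix (Fin 2) (Fin 2) ℝ := g * M.map (Int.cast : ℤ → ℝ) with hB
    have hB00 : B 0 0 = a' := by
      have := congrFun hgm' 0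
      simp only [Matrix.cons_val_zero] at this
      rw [hB]
      simp only [Matrix.mul_apply, Fin.sum_univ_two, Matrix.map_apply, hM] at *
      simpa [Matrix.mulVec, dotProduct, Fin.sum_univ_two] using this
    have hB10 : B 1 0 = 0 := by
      have := congrFun hgm' 1
      simp only [Matrix.cons_val_one, Matrix.head_cons] at this
      rw [hB]
      simp only [Matrix.mul_apply, Fin.sum_univ_two, Matrix.map_apply, hM] at *
      simpa [Matrix.mulVec, dotProduct, Fin.sum_univ_two] using this
    have hBdet : B.det = 1 := by
      rw [hB, Matrix.det_mul, hgdet, one_mul]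
      have : (M.map (Int.cast : ℤ → ℝ)).det = ((M.det : ℤ) : ℝ) := by
        rw [Matrix.det_fin_two, Matrix.det_fin_two]
        simp only [Matrix.map_apply]
        push_cast; ring
      rw [this, hMdet]; norm_num
    set b' : ℝ := B 0 1 with hb'
    have hB11 : B 1 1 = a'⁻¹ := by
      have hdetexp : B.det = B 0 0 * B 1 1 - B 0 1 * B 1 0 := Matrix.det_fin_two B
      rw [hBdet, hB00, hB10] at hdetexp
      field_simp
      linarith
    have hBeq : B = pMat a' b' := by
      rw [Matrix.eta_fin_two B, hB00, hB10, hB11, ← hb']; rfl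
    have hΛB : Λ = latticeOf (pMat a' b') := by
      rw [hgΛ, ← latticeOf_mul g M hMdet, ← hB, hBeq]
    -- shear to put b in the Farey range
    set k : ℤ := ⌊(1 - b') / a'⌋ with hk
    set b'' : ℝ := b' + k * a' with hb''
    have hk1 : (k : ℝ) ≤ (1 - b') / a' := Int.floor_le _
    have hk2 : (1 - b') / a' - 1 < (k : ℝ) := Int.sub_one_lt_floor _
    have hdm : (1 - b') / a' * a' = 1 - b' := div_mul_cancel₀ _ ha'0.ne'
    have hb''le : b'' ≤ 1 := by
      have := mul_le_mul_of_nonneg_right hk1 ha'0.le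
      rw [hdm] at this
      rw [hb'']; linarith
    have hb''gt : 1 - a' < b'' := by
      have := mul_lt_mul_of_pos_right hk2 ha'0
      rw [sub_mul, hdm, one_mul] at this
      rw [hb'']; linarith
    have hb''0 : 0 < b'' := by linarith
    have hsum : 1 < a' + b'' := by linarith
    refine ⟨a', b'', ⟨ha'0, ha'1, hb''0, hb''le, hsum⟩, ?_⟩
    have hsheardet : (!![1, k; 0, 1] : Matrix (Fin 2) (Fin 2) ℤ).det = 1 := by
      rw [Matrix.det_fin_two_of]; ring
    have hshear : pMat a' b' * (!![1, k; 0, 1] : Matrix (Fin 2) (Fin 2) ℤ).map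
        (Int.cast : ℤ → ℝ) = pMat a' b'' := by
      ext i j
      set_option linter.unnecessarySeqFocus false in
      fin_cases i <;> fin_cases j <;>
        simp [pMat, Matrix.mul_apply, Fin.sum_univ_two, Matrix.map_apply, hb''] <;> ring
    rw [hΛB, ← latticeOf_mul (pMat a' b') (!![1, k; 0, 1]) hsheardet, hshear]
  · rintro ⟨a, b, ⟨ha0, ha1, hb0, hb1, hab⟩, hlat⟩
    refine ⟨a, ha0, ha1, ?_⟩
    rw [hlat]
    refine ⟨![1, 0], ?_⟩
    funext i
    fin_cases i <;> simp [pMat, Matrix.mulVec, dotProduct, Fin.sum_univ_two]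
end
end

section
/- Let Λ ⊆ ℝ² be a unimodular lattice containing no nonzero vertical vector (0,y) with |y| ≤ 1. Then the set S_Λ = {s ∈ ℝ : h_s·Λ is horizontally short} is nonempty, and any two distinct elements of S_Λ differ by at least 1; in particular S_Λ is countable and discrete. -/
open MeasureTheory

noncomputable section

/-- The horocycle matrix `h_s = [[1, 0], [-s, 1]]`. -/
def hMat (s : ℝ) : Matrix (Fin 2) (Fin 2) ℝ := !![1, 0; -s, 1]

/-- The action of `h_s` on a lattice. -/
def hAct (s : ℝ) (Λ : Set (Fin 2 → ℝ)) : Set (Fin 2 → ℝ) :=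
  (fun v => (hMat s).mulVec v) '' Λ

section Aux

lemma hMat_mulVec (s : ℝ) (v : Fin 2 → ℝ) :
    (hMat s).mulVec v = ![v 0, v 1 - s * v 0] := by
  funext i
  fin_cases i <;>
    simp [hMat, Matrix.mulVec, dotProduct, Fin.sum_univ_two] <;>
    ring_nf

lemma lattice_neg {g : Matrix (Fin 2) (Fin 2) ℝ} {v : Fin 2 → ℝ}
    (hv : v ∈ latticeOf g) : -v ∈ latticeOf g := by
  obtain ⟨m, rfl⟩ := hv
  refine ⟨-m, ?_⟩
  have h : (fun i => ((-m) i : ℝ)) = -(fun i => (m i : ℝ)) := by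
    funext i; simp
  rw [h, Matrix.mulVec_neg]

lemma det_int {g : Matrix (Fin 2) (Fin 2) ℝ} (hdet : g.det = 1)
    {v w : Fin 2 → ℝ} (hv : v ∈ latticeOf g) (hw : w ∈ latticeOf g) :
    ∃ k : ℤ, v 0 * w 1 - v 1 * w 0 = k := by
  obtain ⟨m, rfl⟩ := hv
  obtain ⟨n, rfl⟩ := hw
  refine ⟨m 0 * n 1 - m 1 * n 0, ?_⟩
  rw [Matrix.det_fin_two] at hdet
  simp only [Matrix.mulVec, dotProduct, Fin.sum_univ_two]
  push_cast
  linear_combination (↑(m 0) * ↑(n 1) - ↑(m 1) * ↑(n 0) : ℝ) * hdet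

open Submodule in
lemma exists_small {g : Matrix (Fin 2) (Fin 2) ℝ} (hdet : g.det = 1) :
    ∃ x : Fin 2 → ℝ, x ≠ 0 ∧ x ∈ latticeOf g ∧ ‖x‖ ≤ 1 := by
  have hinv : Invertible g := g.invertibleOfIsUnitDet (by rw [hdet]; exact isUnit_one)
  set b : Module.Basis (Fin 2) ℝ (Fin 2 → ℝ) :=
    (Pi.basisFun ℝ (Fin 2)).map (g.toLinearEquiv' hinv) with hbdef
  have hb : ∀ i, b i = Matrix.transpose g i := by
    intro i
    have : b i = Matrix.toLin' g (Pi.basisFun ℝ (Fin 2) i) := rfl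
    rw [this, Pi.basisFun_apply, Matrix.toLin'_apply, Matrix.mulVec_single_one]; rfl
  have hb' : ∀ i j, b i j = g j i := fun i j => by rw [hb]; rfl
  have hbmem : ∀ i, b i ∈ latticeOf g := by
    intro i
    refine ⟨fun j => if j = i then 1 else 0, ?_⟩
    have : (fun j => ((if j = i then (1:ℤ) else 0 : ℤ) : ℝ)) = Pi.single i 1 := by
      funext j
      by_cases h : j = i <;> simp [h, Pi.single_apply]
    rw [this, Matrix.mulVec_single_one, hb]; rfl
  have hspan : (span ℤ (Set.range b) : Set (Fin 2 → ℝ)) = latticeOf g := by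
    apply Set.Subset.antisymm
    · intro x hx
      induction hx using Submodule.span_induction with
      | mem x hxm =>
        obtain ⟨i, rfl⟩ := hxm
        exact hbmem i
      | zero =>
        refine ⟨0, ?_⟩
        have : (fun i => ((0 : Fin 2 → ℤ) i : ℝ)) = 0 := by funext i; simp
        rw [this, Matrix.mulVec_zero]
      | add x y _ _ hx hy =>
        obtain ⟨m, rfl⟩ := hx; obtain ⟨n, rfl⟩ := hy
        refine ⟨m + n, ?_⟩
        have h1 : (fun i => ((m + n) i : ℝ))
            = (fun i => (m i : ℝ)) + (fun i => (n i : ℝ)) := by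
          funext i; push_cast; simp
        rw [h1, Matrix.mulVec_add]
      | smul n x _ hx =>
        obtain ⟨m, rfl⟩ := hx
        refine ⟨n • m, ?_⟩
        have h1 : (fun i => ((n • m) i : ℝ)) = (n : ℝ) • (fun i => (m i : ℝ)) := by
          funext i; push_cast; simp
        rw [h1, Matrix.mulVec_smul]
        exact (Int.cast_smul_eq_zsmul ℝ n _).symm
    · rintro x ⟨m, rfl⟩
      have hx : g.mulVec (fun i => (m i : ℝ)) = m 0 • b 0 + m 1 • b 1 := by
        funext j
        have hz : ∀ (c : ℤ) (v : Fin 2 → ℝ) (j : Fin 2), (c • v) j = (c : ℝ) * v j := by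
          intro c v j; simp
        simp only [Pi.add_apply, hz, Matrix.mulVec, dotProduct,
          Fin.sum_univ_two, hb']
        ring
      rw [hx]
      exact add_mem (zsmul_mem (Submodule.subset_span (Set.mem_range_self 0)) _)
        (zsmul_mem (Submodule.subset_span (Set.mem_range_self 1)) _)
  have fund := ZSpan.isAddFundamentalDomain' b (volume : Measure (Fin 2 → ℝ))
  have hvol : volume (ZSpan.fundamentalDomain b) = 1 := by
    rw [ZSpan.volume_fundamentalDomain]
    have hof : (Matrix.of ⇑b) = Matrix.transpose g := by
      ext i j; exact hb' i j
    rw [hof, Matrix.det_transpose, hdet]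
    simp
  have hineq : volume (ZSpan.fundamentalDomain b) * 2 ^ Module.finrank ℝ (Fin 2 → ℝ)
      ≤ volume (Metric.closedBall (0 : Fin 2 → ℝ) 1) := by
    rw [hvol, Real.volume_pi_closedBall 0 zero_le_one]
    simp
  haveI : Countable (span ℤ (Set.range ⇑b)).toAddSubgroup :=
    inferInstanceAs (Countable (span ℤ (Set.range ⇑b)))
  obtain ⟨x, hx0, hxmem⟩ :=
    exists_ne_zero_mem_lattice_of_measure_mul_two_pow_le_measure
      (L := (span ℤ (Set.range b)).toAddSubgroup)
      fund
      (fun x hx => by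
        rw [mem_closedBall_zero_iff] at hx ⊢; simpa using hx)
      (convex_closedBall 0 1) (isCompact_closedBall 0 1) hineq
  refine ⟨x, fun h => hx0 (ZeroMemClass.coe_eq_zero.mp h), ?_, ?_⟩
  · rw [← hspan]; exact x.2
  · exact mem_closedBall_zero_iff.mp hxmem

lemma mem_S_iff (Λ : Set (Fin 2 → ℝ)) (s : ℝ) :
    HorizontallyShort (hAct s Λ) ↔
      ∃ v ∈ Λ, 0 < v 0 ∧ v 0 ≤ 1 ∧ v 1 = s * v 0 := by
  constructor
  · rintro ⟨a, ha1, ha2, v, hv, heq'⟩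
    have heq : (hMat s).mulVec v = ![a, 0] := heq'
    rw [hMat_mulVec] at heq
    have h0 := congrFun heq 0
    have h1 := congrFun heq 1
    simp only [Matrix.cons_val_zero, Matrix.cons_val_one, Matrix.head_cons] at h0 h1
    refine ⟨v, hv, ?_, ?_, ?_⟩
    · rw [h0]; exact ha1
    · rw [h0]; exact ha2
    · linarith
  · rintro ⟨v, hv, h1, h2, h3⟩
    refine ⟨v 0, h1, h2, v, hv, ?_⟩
    show (hMat s).mulVec v = ![v 0, 0]
    rw [hMat_mulVec]
    funext i
    fin_cases i <;> simp [h3]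

end Aux

theorem horocycle_hitting_times_nonempty_and_separated (Λ : Set (Fin 2 → ℝ))
    (hΛ : IsUnimodularLattice Λ)
    (hvert : ∀ y : ℝ, |y| ≤ 1 → ![0, y] ∈ Λ → y = 0) :
    {s : ℝ | HorizontallyShort (hAct s Λ)}.Nonempty ∧
    (∀ s ∈ {s : ℝ | HorizontallyShort (hAct s Λ)},
      ∀ s' ∈ {s : ℝ | HorizontallyShort (hAct s Λ)}, s ≠ s' → 1 ≤ |s - s'|) ∧
    {s : ℝ | HorizontallyShort (hAct s Λ)}.Countable := by
  obtain ⟨g, hdet, rfl⟩ := hΛ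
  have habs : ∀ x : Fin 2 → ℝ, ‖x‖ ≤ 1 → ∀ i, |x i| ≤ 1 := by
    intro x hx i
    calc |x i| = ‖x i‖ := (Real.norm_eq_abs _).symm
    _ ≤ ‖x‖ := norm_le_pi_norm x i
    _ ≤ 1 := hx
  -- separation
  have hsep : ∀ s ∈ {s : ℝ | HorizontallyShort (hAct s (latticeOf g))},
      ∀ s' ∈ {s : ℝ | HorizontallyShort (hAct s (latticeOf g))}, s ≠ s' → 1 ≤ |s - s'| := by
    intro s hs s' hs' hne
    obtain ⟨v, hv, hv1, hv2, hv3⟩ := (mem_S_iff _ s).mp hs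
    obtain ⟨w, hw, hw1, hw2, hw3⟩ := (mem_S_iff _ s').mp hs'
    obtain ⟨k, hk⟩ := det_int hdet hv hw
    rw [hv3, hw3] at hk
    have hk0 : k ≠ 0 := by
      intro h
      rw [h] at hk
      push_cast at hk
      have : v 0 * w 0 * (s' - s) = 0 := by linarith
      rcases mul_eq_zero.mp this with h' | h'
      · nlinarith
      · exact hne (by linarith [sub_eq_zero.mp h'])
    have hk1 : (1 : ℝ) ≤ |(k : ℝ)| := by
      rw [← Int.cast_abs]
      exact_mod_cast Int.one_le_abs hk0
    have habs2 : |(k : ℝ)| = v 0 * w 0 * |s - s'| := by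
      rw [← hk]
      rw [show v 0 * (s' * w 0) - s * v 0 * w 0 = v 0 * w 0 * (s' - s) by ring]
      rw [abs_mul, abs_of_pos (by positivity), abs_sub_comm]
    rw [habs2] at hk1
    have hvw : v 0 * w 0 ≤ 1 := mul_le_one₀ hv2 hw1.le hw2
    exact le_trans hk1 (mul_le_of_le_one_left (abs_nonneg _) hvw)
  refine ⟨?_, hsep, ?_⟩
  · -- nonempty
    obtain ⟨x, hx0, hxmem, hxnorm⟩ := exists_small hdet
    have hx00 : x 0 ≠ 0 := by
      intro h
      have hxeq : x = ![0, x 1] := by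
        funext i; fin_cases i <;> simp [h]
      have h1 : x 1 = 0 :=
        hvert (x 1) (habs x hxnorm 1) (hxeq ▸ hxmem)
      apply hx0
      rw [hxeq, h1]
      funext i; fin_cases i <;> simp
    obtain ⟨v, hvmem, hv1, hv2⟩ :
        ∃ v, v ∈ latticeOf g ∧ 0 < v 0 ∧ v 0 ≤ 1 := by
      rcases hx00.lt_or_gt with hneg | hpos
      · refine ⟨-x, lattice_neg hxmem, ?_, ?_⟩
        · simpa using hneg
        · obtain ⟨hl, hr⟩ := abs_le.mp (habs x hxnorm 0)
          simp only [Pi.neg_apply]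
          linarith
      · refine ⟨x, hxmem, hpos, ?_⟩
        obtain ⟨hl, hr⟩ := abs_le.mp (habs x hxnorm 0)
        linarith
    refine ⟨v 1 / v 0, (mem_S_iff _ _).mpr ⟨v, hvmem, hv1, hv2, ?_⟩⟩
    field_simp
  · -- countable
    apply Set.countable_of_injective_of_countable_image
      (f := fun s : ℝ => (⌊s⌋ : ℤ))
    · intro s hs s' hs' hfl
      by_contra hne
      have h1 := hsep s hs s' hs' hne
      have h2 : |s - s'| < 1 := by
        have hfs := Int.floor_le s
        have hfs' := Int.floor_le s'
        have hls := Int.lt_floor_add_one s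
        have hls' := Int.lt_floor_add_one s'
        simp only at hfl
        rw [hfl] at hfs hls
        rw [abs_sub_lt_iff]
        constructor <;> linarith
      linarith
    · exact Set.to_countable _
end
end

section
/- Let Q ≥ 1 be an integer and let γ_i = p_i/q_i (in lowest terms) denote the elements of the Farey sequence F(Q), with the convention γ_{N+1} = 1/1, q_{N+1} = 1, where N = N(Q). Then for every 1 ≤ i ≤ N−1 one has T(q_i/Q, q_{i+1}/Q) = (q_{i+1}/Q, q_{i+2}/Q) and R(q_i/Q, q_{i+1}/Q) = Q²·(γ_{i+1} − γ_i). Consequently the point (1/Q, 1) ∈ Ω is T-periodic with minimal period N(Q), and Σ_{n=0}^{N(Q)−1} R(T^n(1/Q, 1)) = Q². -/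
open MeasureTheory

noncomputable section

/-- The BCZ map `T(a,b) = (b, -a + ⌊(1+a)/b⌋ b)`. -/
def bcz (p : ℝ × ℝ) : ℝ × ℝ :=
  (p.2, -p.1 + (⌊(1 + p.1) / p.2⌋ : ℝ) * p.2)

/-- The roof function `R(a,b) = 1/(ab)`. -/
def Rfun (p : ℝ × ℝ) : ℝ := 1 / (p.1 * p.2)

/-- The set of Farey fractions of level `Q`: rationals `p/q ∈ [0,1)` in lowest
terms with denominator `q ≤ Q`. -/
def fareySet (Q : ℕ) : Set ℚ := {x | 0 ≤ x ∧ x < 1 ∧ x.den ≤ Q}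

/-- `N(Q) = ∑_{q ≤ Q} φ(q)`, the cardinality of the Farey sequence `F(Q)`. -/
def NFarey (Q : ℕ) : ℕ := ∑ q ∈ Finset.Icc 1 Q, Nat.totient q

/-! ### Auxiliary lemmas -/

lemma rat_mul_den (a : ℚ) : a * (a.den : ℚ) = (a.num : ℚ) := by
  have h : ((a.den : ℚ)) ≠ 0 := Nat.cast_ne_zero.mpr a.den_nz
  nth_rewrite 1 [← Rat.num_div_den a]
  exact div_mul_cancel₀ _ h

lemma rat_sub_eq (a b : ℚ) :
    b - a = ((b.num * a.den - a.num * b.den : ℤ) : ℚ) / ((a.den : ℚ) * (b.den : ℚ)) := by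
  rw [eq_div_iff (by positivity)]
  push_cast
  have ha := rat_mul_den a
  have hb := rat_mul_den b
  calc (b - a) * ((a.den:ℚ) * b.den) = (b * b.den) * a.den - (a * a.den) * b.den := by ring
  _ = (b.num:ℚ) * a.den - a.num * b.den := by rw [ha, hb]

lemma one_le_num_sub {a b : ℚ} (h : a < b) : 1 ≤ b.num * a.den - a.num * b.den := by
  have h1 := rat_sub_eq a b
  have h2 : 0 < b - a := sub_pos.mpr h
  rw [h1] at h2
  have hd : (0:ℚ) < ((a.den : ℚ) * (b.den : ℚ)) := by positivity
  have h3 : (0:ℚ) < ((b.num * a.den - a.num * b.den : ℤ) : ℚ) := by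
    by_contra hc
    push_neg at hc
    nlinarith [div_nonpos_of_nonpos_of_nonneg hc hd.le]
  have : (0:ℤ) < b.num * a.den - a.num * b.den := by exact_mod_cast h3
  omega

lemma rat_sub_ge {a b : ℚ} (h : a < b) : 1 / ((a.den : ℚ) * (b.den : ℚ)) ≤ b - a := by
  rw [rat_sub_eq a b]
  have h1 : (1:ℚ) ≤ ((b.num * a.den - a.num * b.den : ℤ) : ℚ) := by exact_mod_cast one_le_num_sub h
  exact div_le_div_of_nonneg_right h1 (by positivity) |>.trans_eq rfl

lemma denom_bound {x y d : ℚ} (hx : 0 < x) (hy : 0 < y) (hd : 0 < d)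
    (h : 1/(x*d) + 1/(d*y) ≤ 1/(x*y)) : x + y ≤ d := by
  rw [div_add_div _ _ (by positivity) (by positivity),
    div_le_div_iff₀ (by positivity) (by positivity)] at h
  have h2 : (x + y) * (x * d * y) ≤ d * (x * d * y) := by nlinarith
  exact le_of_mul_le_mul_right h2 (by positivity)

lemma exists_farey_succ (Q p q : ℤ) (hQ : 1 ≤ Q) (hq0 : 0 < q) (hqQ : q ≤ Q)
    (hp0 : 0 ≤ p) (hpq : p < q) (hcop : IsCoprime p q) :
    ∃ p' q' : ℤ, p' * q - p * q' = 1 ∧ 0 < p' ∧ p' ≤ q' ∧ Q - q < q' ∧ q' ≤ Q ∧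
      IsCoprime p' q' := by
  obtain ⟨u, v, huv⟩ := hcop
  have hmod0 : 0 ≤ (Q + u) % q := Int.emod_nonneg _ hq0.ne'
  have hmodq : (Q + u) % q < q := Int.emod_lt_of_pos _ hq0
  have hkey : (v + p * ((Q + u) / q)) * q - p * (Q - (Q + u) % q) = 1 := by
    rw [Int.emod_def]; linear_combination huv
  refine ⟨(v + p * ((Q + u) / q)), Q - (Q + u) % q, hkey, ?_, ?_, by omega, by omega,
    ⟨q, -p, by linear_combination hkey⟩⟩
  · by_contra hc
    push_neg at hc
    nlinarith [mul_nonneg hp0 (by omega : (0:ℤ) ≤ Q - (Q + u) % q),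
      mul_nonpos_of_nonpos_of_nonneg hc hq0.le]
  · have h2 : 1 * 1 ≤ (q - p) * (Q - (Q + u) % q) :=
      mul_le_mul (by omega) (by omega) (by norm_num) (by omega)
    have h3 : (v + p * ((Q + u) / q)) * q ≤ (Q - (Q + u) % q) * q := by nlinarith
    exact le_of_mul_le_mul_right h3 hq0

lemma farey_adjacent (Q : ℕ) (hQ : 1 ≤ Q) (a b : ℚ)
    (ha : a ∈ fareySet Q) (hb : b ∈ fareySet Q ∪ {1}) (hab : a < b)
    (hadj : ∀ c ∈ fareySet Q ∪ {(1:ℚ)}, ¬(a < c ∧ c < b)) :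
    b.num * a.den - a.num * b.den = 1 ∧ Q < a.den + b.den := by
  obtain ⟨ha0, ha1, haQ⟩ := ha
  have hq0 : (0:ℤ) < (a.den:ℤ) := by exact_mod_cast a.pos
  have hp0 : (0:ℤ) ≤ a.num := Rat.num_nonneg.mpr ha0
  have hpq : a.num < (a.den:ℤ) := Rat.lt_one_iff_num_lt_denom.mpr ha1
  have hadQ : (a.den:ℤ) ≤ (Q:ℤ) := by exact_mod_cast haQ
  have hcop : IsCoprime a.num (a.den:ℤ) := by
    rw [Int.isCoprime_iff_gcd_eq_one]
    exact_mod_cast a.reduced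
  obtain ⟨p', q', hkey, hp'pos, hp'le, hq'gt, hq'le, hcop'⟩ :=
    exists_farey_succ Q a.num a.den (by exact_mod_cast hQ) hq0 hadQ hp0 hpq hcop
  have hq'pos : (0:ℤ) < q' := by omega
  have hcopn : Nat.Coprime p'.natAbs q'.natAbs := Int.isCoprime_iff_gcd_eq_one.mp hcop'
  have hb'num : ((p' : ℚ) / (q' : ℚ)).num = p' := Rat.num_div_eq_of_coprime hq'pos hcopn
  have hb'den : (((p' : ℚ) / (q' : ℚ)).den : ℤ) = q' := Rat.den_div_eq_of_coprime hq'pos hcopn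
  have hq'R : (0:ℚ) < (q' : ℚ) := by exact_mod_cast hq'pos
  have hqR : (0:ℚ) < (a.den : ℚ) := by exact_mod_cast hq0
  have hab' : a < (p' : ℚ) / (q' : ℚ) := by
    rw [← Rat.num_div_den a, div_lt_div_iff₀ hqR hq'R]
    have h1 : (p':ℚ) * a.den = 1 + a.num * q' := by
      exact_mod_cast congrArg (fun z : ℤ => (z:ℚ))
        (by linarith [hkey] : p' * (a.den:ℤ) = 1 + a.num * q')
    push_cast at h1 ⊢
    linarith
  have hb'S : (p' : ℚ) / (q' : ℚ) ∈ fareySet Q ∪ {(1:ℚ)} := by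
    rcases eq_or_lt_of_le hp'le with heq | hlt
    · right
      simp only [Set.mem_singleton_iff, heq]
      exact div_self (by positivity)
    · left
      refine ⟨by positivity, ?_, ?_⟩
      · rw [div_lt_one hq'R]
        exact_mod_cast hlt
      · have h2 : (((p' : ℚ) / (q' : ℚ)).den : ℤ) ≤ (Q:ℤ) := hb'den.trans_le hq'le
        exact_mod_cast h2
  have hsub' : (p' : ℚ) / (q' : ℚ) - a = 1 / ((a.den:ℚ) * q') := by
    rw [rat_sub_eq a _, hb'num]
    rw [show (p' * (a.den:ℤ) - a.num * (((p' : ℚ) / (q' : ℚ)).den : ℤ)) = 1 from by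
      rw [hb'den]; linarith [hkey]]
    rw [show ((((p' : ℚ) / (q' : ℚ)).den : ℚ)) = ((q':ℚ)) from by exact_mod_cast hb'den]
    norm_num
  have hbb' : b = (p' : ℚ) / (q' : ℚ) := by
    rcases lt_trichotomy ((p' : ℚ) / (q' : ℚ)) b with h | h | h
    · exact absurd ⟨hab', h⟩ (hadj _ hb'S)
    · exact h.symm
    · exfalso
      have hbden : (b.den : ℤ) ≤ Q := by
        rcases hb with hb | hb
        · exact_mod_cast hb.2.2
        · simp only [Set.mem_singleton_iff] at hb
          rw [hb]; simpa using hQ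
      have hd : (0:ℚ) < (b.den : ℚ) := by exact_mod_cast b.pos
      have h1 : 1 / ((a.den : ℚ) * b.den) ≤ b - a := rat_sub_ge hab
      have h2 : 1 / ((b.den : ℚ) * ((q':ℚ))) ≤ (p' : ℚ) / (q' : ℚ) - b := by
        have h2' := rat_sub_ge h
        rwa [show ((((p' : ℚ) / (q' : ℚ)).den : ℚ)) = ((q':ℚ)) from by exact_mod_cast hb'den] at h2'
      have hsum : 1 / ((a.den:ℚ) * b.den) + 1 / ((b.den:ℚ) * q') ≤ 1 / ((a.den:ℚ) * q') := by
        calc 1 / ((a.den:ℚ) * b.den) + 1 / ((b.den:ℚ) * q')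
            ≤ (b - a) + ((p' : ℚ) / (q' : ℚ) - b) := add_le_add h1 h2
        _ = 1 / ((a.den:ℚ) * q') := by rw [← hsub']; ring
      have hge : (a.den:ℚ) + q' ≤ (b.den : ℚ) := denom_bound hqR hq'R hd hsum
      have hgeZ : (a.den:ℤ) + q' ≤ (b.den : ℤ) := by exact_mod_cast hge
      omega
  rw [hbb', hb'num]
  constructor
  · have h6 : (((p' : ℚ) / (q' : ℚ)).den : ℤ) = q' := hb'den
    rw [h6]; linarith [hkey]
  · omega

lemma den_rec (Q : ℕ) (a b c : ℚ)
    (h1 : b.num * a.den - a.num * b.den = 1)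
    (h2 : c.num * b.den - b.num * c.den = 1)
    (hcQ : c.den ≤ Q) (hbc : Q < b.den + c.den) :
    ∃ k : ℤ, (c.den:ℤ) = k * b.den - a.den ∧ k * b.den ≤ Q + a.den ∧
      (Q:ℤ) + a.den < (k+1) * b.den := by
  have hco : IsCoprime (b.den:ℤ) b.num := by
    rw [Int.isCoprime_iff_gcd_eq_one, Int.gcd_comm]
    exact_mod_cast b.reduced
  have hdvd : (b.den:ℤ) ∣ ((a.den:ℤ) + c.den) :=
    hco.dvd_of_dvd_mul_left ⟨a.num + c.num, by linarith⟩
  obtain ⟨k, hk⟩ := hdvd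
  have hcQ' : (c.den:ℤ) ≤ Q := by exact_mod_cast hcQ
  have hbc' : (Q:ℤ) < (b.den:ℤ) + c.den := by exact_mod_cast hbc
  exact ⟨k, by linarith [hk], by linarith [hk], by linarith [hk]⟩

lemma bcz_step (Q : ℕ) (hQ : 1 ≤ Q) (a b c : ℚ) (k : ℤ)
    (hrec : (c.den:ℤ) = k * b.den - a.den)
    (hlo : k * b.den ≤ Q + a.den) (hhi : (Q:ℤ) + a.den < (k+1) * b.den) :
    bcz (((a.den:ℝ)) / Q, ((b.den:ℝ)) / Q) = (((b.den:ℝ)) / Q, ((c.den:ℝ)) / Q) := by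
  have hQ0 : (0:ℝ) < Q := by exact_mod_cast hQ
  have hbd : (0:ℝ) < (b.den:ℝ) := by exact_mod_cast b.pos
  have harg : (1 + (a.den:ℝ)/Q) / ((b.den:ℝ)/Q) = ((Q:ℝ) + a.den) / (b.den:ℝ) := by
    field_simp
  have hfloor : ⌊(1 + (a.den:ℝ)/Q) / ((b.den:ℝ)/Q)⌋ = k := by
    rw [harg, Int.floor_eq_iff]
    constructor
    · rw [le_div_iff₀ hbd]
      exact_mod_cast hlo
    · rw [div_lt_iff₀ hbd]
      have : ((Q:ℝ)) + a.den < ((k:ℝ) + 1) * b.den := by exact_mod_cast hhi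
      linarith
  unfold bcz
  dsimp only
  rw [hfloor]
  have hc : ((c.den:ℝ)) = k * b.den - a.den := by exact_mod_cast hrec
  simp only [Prod.mk.injEq, true_and]
  rw [hc]
  field_simp
  ring

lemma rfun_step (Q : ℕ) (hQ : 1 ≤ Q) (a b : ℚ)
    (h1 : b.num * a.den - a.num * b.den = 1) :
    Rfun (((a.den:ℝ)) / Q, ((b.den:ℝ)) / Q) = (Q:ℝ)^2 * ((b:ℝ) - (a:ℝ)) := by
  have hQ0 : (0:ℝ) < Q := by exact_mod_cast hQ
  have had : (0:ℝ) < (a.den:ℝ) := by exact_mod_cast a.pos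
  have hbd : (0:ℝ) < (b.den:ℝ) := by exact_mod_cast b.pos
  have hq : b - a = 1 / ((a.den:ℚ) * b.den) := by
    rw [rat_sub_eq a b, h1]
    norm_num
  have hr : (b:ℝ) - (a:ℝ) = 1 / ((a.den:ℝ) * b.den) := by
    have h5 : ((b - a : ℚ) : ℝ) = ((1 / ((a.den:ℚ) * b.den) : ℚ) : ℝ) := by rw [hq]
    push_cast at h5
    exact h5
  rw [hr]
  unfold Rfun
  field_simp

theorem bcz_farey_orbit (Q : ℕ) (hQ : 1 ≤ Q) (γ : ℕ → ℚ)
    (hmono : StrictMonoOn γ (Set.Icc 1 (NFarey Q + 1)))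
    (hrange : γ '' Set.Icc 1 (NFarey Q) = fareySet Q)
    (hlast : γ (NFarey Q + 1) = 1) :
    (∀ i : ℕ, 1 ≤ i → i ≤ NFarey Q - 1 →
      bcz (((γ i).den : ℝ) / Q, ((γ (i + 1)).den : ℝ) / Q)
          = (((γ (i + 1)).den : ℝ) / Q, ((γ (i + 2)).den : ℝ) / Q) ∧
      Rfun (((γ i).den : ℝ) / Q, ((γ (i + 1)).den : ℝ) / Q)
          = (Q : ℝ) ^ 2 * ((γ (i + 1) : ℝ) - (γ i : ℝ))) ∧
    Function.IsPeriodicPt bcz (NFarey Q) (1 / (Q : ℝ), 1) ∧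
    Function.minimalPeriod bcz (1 / (Q : ℝ), 1) = NFarey Q ∧
    ∑ n ∈ Finset.range (NFarey Q), Rfun (bcz^[n] (1 / (Q : ℝ), 1)) = (Q : ℝ) ^ 2 := by
  have hN1 : 1 ≤ NFarey Q := by
    have h := Finset.single_le_sum (f := fun q => Nat.totient q)
      (fun i _ => Nat.zero_le _) (Finset.mem_Icc.mpr ⟨le_refl 1, hQ⟩)
    simpa [NFarey, Nat.totient_one] using h
  have hQ0 : (0:ℝ) < Q := by exact_mod_cast hQ
  have hmemF : ∀ i, 1 ≤ i → i ≤ NFarey Q → γ i ∈ fareySet Q := fun i h1 h2 =>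
    hrange ▸ Set.mem_image_of_mem γ (Set.mem_Icc.mpr ⟨h1, h2⟩)
  have hmemS : ∀ i, 1 ≤ i → i ≤ NFarey Q + 1 → γ i ∈ fareySet Q ∪ {(1:ℚ)} := by
    intro i h1 h2
    rcases Nat.lt_or_ge i (NFarey Q + 1) with hl | hg
    · exact Or.inl (hmemF i h1 (by omega))
    · have hi : i = NFarey Q + 1 := by omega
      exact Or.inr (by rw [Set.mem_singleton_iff, hi, hlast])
  have hdenS : ∀ i, 1 ≤ i → i ≤ NFarey Q + 1 → (γ i).den ≤ Q := by
    intro i h1 h2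
    rcases hmemS i h1 h2 with h | h
    · exact h.2.2
    · rw [Set.mem_singleton_iff] at h
      rw [h]
      simpa using hQ
  have hadjall : ∀ i, 1 ≤ i → i ≤ NFarey Q →
      (γ (i+1)).num * (γ i).den - (γ i).num * (γ (i+1)).den = 1 ∧
      Q < (γ i).den + (γ (i+1)).den := by
    intro i h1 h2
    apply farey_adjacent Q hQ _ _ (hmemF i h1 h2) (hmemS (i+1) (by omega) (by omega))
    · exact hmono (Set.mem_Icc.mpr ⟨h1, by omega⟩) (Set.mem_Icc.mpr ⟨by omega, by omega⟩)
        (by omega)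
    · rintro c hc ⟨hc1, hc2⟩
      obtain ⟨j, hj1, hjN1, rfl⟩ : ∃ j, 1 ≤ j ∧ j ≤ NFarey Q + 1 ∧ γ j = c := by
        rcases hc with hc | hc
        · rw [← hrange] at hc
          obtain ⟨j, hj, he⟩ := hc
          rw [Set.mem_Icc] at hj
          exact ⟨j, hj.1, by omega, he⟩
        · rw [Set.mem_singleton_iff] at hc
          exact ⟨NFarey Q + 1, by omega, le_refl _, by rw [hlast, hc]⟩
      have hij : i < j := by
        by_contra hcon
        push_neg at hcon
        have := hmono.monotoneOn (Set.mem_Icc.mpr ⟨hj1, by omega⟩)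
          (Set.mem_Icc.mpr ⟨h1, by omega⟩) hcon
        exact absurd hc1 (not_lt.mpr this)
      have hji : j < i + 1 := by
        by_contra hcon
        push_neg at hcon
        have := hmono.monotoneOn (Set.mem_Icc.mpr ⟨by omega, by omega⟩)
          (Set.mem_Icc.mpr ⟨hj1, hjN1⟩) hcon
        exact absurd hc2 (not_lt.mpr this)
      omega
  have hzero : γ 1 = 0 := by
    have h0mem : (0:ℚ) ∈ fareySet Q := ⟨le_refl 0, by norm_num, by simpa using hQ⟩
    rw [← hrange] at h0mem
    obtain ⟨j, hj, hj0⟩ := h0mem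
    rw [Set.mem_Icc] at hj
    rcases eq_or_lt_of_le hj.1 with he | hl
    · rw [he, hj0]
    · exfalso
      have hlt : γ 1 < γ j := hmono (Set.mem_Icc.mpr ⟨le_refl 1, by omega⟩)
        (Set.mem_Icc.mpr ⟨hj.1, by omega⟩) hl
      have h1mem := hmemF 1 le_rfl hN1
      have h01 : (0:ℚ) ≤ γ 1 := h1mem.1
      rw [hj0] at hlt
      linarith
  have hgd1 : (γ 1).den = 1 := by rw [hzero]; rfl
  have hgn1 : (γ 1).num = 0 := by rw [hzero]; rfl
  have hgd2 : (γ 2).den = Q := by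
    have h := (hadjall 1 le_rfl hN1).2
    rw [hgd1] at h
    have he : (1:ℕ) + 1 = 2 := rfl
    rw [he] at h
    have h2 := hdenS 2 (by omega) (by omega)
    omega
  have hgdN : (γ (NFarey Q)).den = Q := by
    have h := (hadjall (NFarey Q) hN1 le_rfl).2
    rw [hlast] at h
    have h1 : (1:ℚ).den = 1 := rfl
    rw [h1] at h
    have h2 := hdenS (NFarey Q) hN1 (by omega)
    omega
  have part1 : ∀ i : ℕ, 1 ≤ i → i ≤ NFarey Q - 1 →
      bcz (((γ i).den : ℝ) / Q, ((γ (i + 1)).den : ℝ) / Q)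
          = (((γ (i + 1)).den : ℝ) / Q, ((γ (i + 2)).den : ℝ) / Q) ∧
      Rfun (((γ i).den : ℝ) / Q, ((γ (i + 1)).den : ℝ) / Q)
          = (Q : ℝ) ^ 2 * ((γ (i + 1) : ℝ) - (γ i : ℝ)) := by
    intro i h1 h2
    obtain ⟨hu1, hs1⟩ := hadjall i h1 (by omega)
    obtain ⟨hu2, hs2⟩ := hadjall (i+1) (by omega) (by omega)
    have hcQ : (γ (i+2)).den ≤ Q := hdenS (i+2) (by omega) (by omega)
    obtain ⟨k, hk1, hk2, hk3⟩ := den_rec Q (γ i) (γ (i+1)) (γ (i+2)) hu1 hu2 hcQ hs2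
    exact ⟨bcz_step Q hQ _ _ _ k hk1 hk2 hk3, rfun_step Q hQ _ _ hu1⟩
  have horb : ∀ n, n ≤ NFarey Q - 1 →
      bcz^[n] (1/(Q:ℝ), 1) = (((γ (n+1)).den : ℝ)/Q, ((γ (n+2)).den : ℝ)/Q) := by
    intro n
    induction n with
    | zero =>
      intro _
      rw [Function.iterate_zero_apply, hgd1, hgd2]
      rw [Prod.mk.injEq]
      refine ⟨by norm_num, ?_⟩
      rw [div_self hQ0.ne']
    | succ n ih =>
      intro hn
      rw [Function.iterate_succ_apply', ih (by omega)]
      exact (part1 (n+1) (by omega) (by omega)).1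
  have hperiodic : Function.IsPeriodicPt bcz (NFarey Q) (1/(Q:ℝ), 1) := by
    have hNm : NFarey Q - 1 + 1 = NFarey Q := by omega
    have h1 := horb (NFarey Q - 1) le_rfl
    show bcz^[NFarey Q] _ = _
    rw [← hNm, Function.iterate_succ_apply', h1]
    rw [show NFarey Q - 1 + 1 = NFarey Q from hNm,
      show NFarey Q - 1 + 2 = NFarey Q + 1 from by omega]
    rw [hgdN, hlast]
    rw [show (((1:ℚ).den : ℝ)) = 1 from by norm_num, div_self hQ0.ne']
    unfold bcz
    dsimp only
    have h2 : ((1:ℝ) + 1) / ((1:ℝ)/Q) = ((2*Q : ℤ) : ℝ) := by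
      push_cast
      rw [one_div, div_inv_eq_mul]
      ring
    rw [h2, Int.floor_intCast]
    rw [Prod.mk.injEq]
    refine ⟨rfl, ?_⟩
    have h3 : ((2*Q : ℤ) : ℝ) * ((1:ℝ)/Q) = 2 := by
      push_cast
      field_simp
    rw [h3]
    norm_num
  have hmp : Function.minimalPeriod bcz (1/(Q:ℝ), 1) = NFarey Q := by
    have hple : Function.minimalPeriod bcz (1/(Q:ℝ), 1) ≤ NFarey Q :=
      hperiodic.minimalPeriod_le hN1
    rcases eq_or_lt_of_le hple with he | hl
    · exact he
    · exfalso
      have hmper : Function.IsPeriodicPt bcz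
          (Function.minimalPeriod bcz (1/(Q:ℝ), 1)) (1/(Q:ℝ), 1) :=
        Function.isPeriodicPt_minimalPeriod bcz _
      have hppos : 0 < Function.minimalPeriod bcz (1/(Q:ℝ), 1) :=
        hperiodic.minimalPeriod_pos hN1
      set m := Function.minimalPeriod bcz (1/(Q:ℝ), 1) with hm
      have hthis := horb m (by omega)
      rw [hmper] at hthis
      have hfst := congrArg Prod.fst hthis
      dsimp at hfst
      have hden1 : (γ (m+1)).den = 1 := by
        have : ((γ (m+1)).den : ℝ) = 1 := by
          field_simp at hfst
          exact_mod_cast hfst.symm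
        exact_mod_cast this
      have hmem := hmemF (m+1) (by omega) (by omega)
      have hval : γ (m+1) = 0 := by
        have hint : γ (m+1) = ((γ (m+1)).num : ℚ) := by
          conv_lhs => rw [← Rat.num_div_den (γ (m+1))]
          rw [hden1]
          norm_num
        have h0 : 0 ≤ (γ (m+1)).num := Rat.num_nonneg.mpr hmem.1
        have h1' : (γ (m+1)).num < ((γ (m+1)).den : ℤ) :=
          Rat.lt_one_iff_num_lt_denom.mpr hmem.2.1
        rw [hden1] at h1'
        have : (γ (m+1)).num = 0 := by
          have : (γ (m+1)).num < ((1:ℕ):ℤ) := h1'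
          omega
        rw [hint, this]
        norm_num
      have hlt : γ 1 < γ (m+1) := hmono (Set.mem_Icc.mpr ⟨le_refl 1, by omega⟩)
        (Set.mem_Icc.mpr ⟨by omega, by omega⟩) (by omega)
      rw [hzero, hval] at hlt
      exact lt_irrefl _ hlt
  refine ⟨part1, hperiodic, hmp, ?_⟩
  have hterm : ∀ n ∈ Finset.range (NFarey Q),
      Rfun (bcz^[n] (1/(Q:ℝ), 1)) = (Q:ℝ)^2 * ((γ (n+2) : ℝ) - (γ (n+1) : ℝ)) := by
    intro n hn
    rw [Finset.mem_range] at hn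
    rw [horb n (by omega)]
    exact rfun_step Q hQ _ _ (hadjall (n+1) (by omega) (by omega)).1
  rw [Finset.sum_congr rfl hterm, ← Finset.mul_sum]
  have htel : ∑ n ∈ Finset.range (NFarey Q), ((γ (n+2) : ℝ) - (γ (n+1) : ℝ))
      = (γ (NFarey Q + 1) : ℝ) - (γ 1 : ℝ) := by
    have h := Finset.sum_range_sub (f := fun n => (γ (n+1) : ℝ)) (NFarey Q)
    simpa using h
  rw [htel, hlast, hzero]
  norm_num
end
end

section
/- A point (a,b) ∈ Ω is T-periodic if and only if its slope b/a is rational. In particular, the set of T-periodic points is dense in Ω. -/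
noncomputable section

/-- The BCZ map preserves the Farey triangle. -/
lemma bcz_mem {p : ℝ × ℝ} (hp : p ∈ FareyTriangle) : bcz p ∈ FareyTriangle := by
  obtain ⟨h1, h2, h3, h4, h5⟩ := hp
  have hkb : (⌊(1 + p.1) / p.2⌋ : ℝ) * p.2 ≤ 1 + p.1 := by
    rw [← le_div_iff₀ h3]; exact Int.floor_le _
  have hkb' : 1 + p.1 < (⌊(1 + p.1) / p.2⌋ : ℝ) * p.2 + p.2 := by
    have := Int.lt_floor_add_one ((1 + p.1) / p.2)
    rw [div_lt_iff₀ h3] at this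
    nlinarith
  exact ⟨h3, h4, by simp only [bcz]; nlinarith, by simp only [bcz]; nlinarith,
    by simp only [bcz]; nlinarith⟩

/-- The BCZ map is injective on the Farey triangle. -/
lemma bcz_injOn : Set.InjOn bcz FareyTriangle := by
  rintro x ⟨hx1, hx2, hx3, hx4, hx5⟩ y ⟨hy1, hy2, hy3, hy4, hy5⟩ h
  rw [Prod.ext_iff] at h
  obtain ⟨h1, h2⟩ := h
  simp only [bcz] at h1 h2
  have hb : x.2 = y.2 := h1
  rw [Prod.ext_iff]
  refine ⟨?_, hb⟩
  by_contra hne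
  have hdiff : x.1 - y.1 = ((⌊(1 + x.1) / x.2⌋ - ⌊(1 + y.1) / y.2⌋ : ℤ) : ℝ) * x.2 := by
    push_cast
    rw [hb] at h2 ⊢
    linarith
  have hK : (⌊(1 + x.1) / x.2⌋ - ⌊(1 + y.1) / y.2⌋ : ℤ) ≠ 0 := by
    intro h0
    rw [h0] at hdiff
    simp at hdiff
    exact hne (by linarith)
  have h1le : (1 : ℝ) ≤ |((⌊(1 + x.1) / x.2⌋ - ⌊(1 + y.1) / y.2⌋ : ℤ) : ℝ)| := by
    rw [← Int.cast_abs]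
    exact_mod_cast Int.one_le_abs hK
  have habs : |x.1 - y.1| < x.2 := by
    rw [abs_lt]
    constructor <;> nlinarith [hb]
  rw [hdiff, abs_mul, abs_of_pos hx3] at habs
  nlinarith

lemma bcz_iterate_injOn : ∀ m : ℕ, Set.InjOn (bcz^[m]) FareyTriangle := by
  intro m
  induction m with
  | zero => simp [Set.injOn_id]
  | succ m ih =>
    intro x hx y hy h
    rw [Function.iterate_succ_apply, Function.iterate_succ_apply] at h
    exact bcz_injOn hx hy (ih (bcz_mem hx) (bcz_mem hy) h)

/-- Integer solution sequence (pairs of consecutive values) of the recurrence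
`u_{i+2} = k i * u_{i+1} - u_i`. -/
def solSeq (k : ℕ → ℤ) (init : ℤ × ℤ) : ℕ → ℤ × ℤ
  | 0 => init
  | n + 1 => ((solSeq k init n).2, k n * (solSeq k init n).2 - (solSeq k init n).1)

/-- A periodic point of the BCZ map has rational slope. -/
lemma rat_slope_of_periodic {p : ℝ × ℝ} (hp : p ∈ FareyTriangle) {n : ℕ} (hn : 0 < n)
    (hper : bcz^[n] p = p) : ∃ r : ℚ, p.2 / p.1 = (r : ℝ) := by
  by_contra hirr
  push_neg at hirr
  set q : ℕ → ℝ × ℝ := fun i => bcz^[i] p with hq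
  have hqmem : ∀ i, q i ∈ FareyTriangle := by
    intro i
    induction i with
    | zero => exact hp
    | succ i ih =>
      have : q (i + 1) = bcz (q i) := Function.iterate_succ_apply' bcz i p
      rw [this]; exact bcz_mem ih
  set k : ℕ → ℤ := fun i => ⌊(1 + (q i).1) / (q i).2⌋ with hk
  have hstep : ∀ i, q (i + 1) = ((q i).2, -(q i).1 + (k i : ℝ) * (q i).2) :=
    fun i => Function.iterate_succ_apply' bcz i p
  set A : ℕ → ℤ × ℤ := solSeq k (1, 0) with hA
  set B : ℕ → ℤ × ℤ := solSeq k (0, 1) with hB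
  have hrep : ∀ i, (q i).1 = ((A i).1 : ℝ) * p.1 + ((B i).1 : ℝ) * p.2 ∧
      (q i).2 = ((A i).2 : ℝ) * p.1 + ((B i).2 : ℝ) * p.2 := by
    intro i
    induction i with
    | zero =>
      simp only [hA, hB, solSeq, hq, Function.iterate_zero_apply]
      push_cast; constructor <;> ring
    | succ i ih =>
      obtain ⟨ih1, ih2⟩ := ih
      rw [hstep i]
      simp only [hA, hB, solSeq]
      constructor
      · exact ih2
      · push_cast; rw [ih1, ih2]; ring
  have hW : ∀ i, (q i).1 * ((B i).2 : ℝ) - (q i).2 * ((B i).1 : ℝ) = p.1 := by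
    intro i
    induction i with
    | zero =>
      simp only [hB, solSeq, hq, Function.iterate_zero_apply]
      push_cast; ring
    | succ i ih =>
      rw [hstep i]
      simp only [hB, solSeq]
      push_cast
      linear_combination ih
  have hpos1 : ∀ i, 0 < (q i).1 := fun i => (hqmem i).1
  have hpos2 : ∀ i, 0 < (q i).2 := fun i => (hqmem i).2.2.1
  have hqn : q n = p := hper
  have hBn : (B n).1 = 0 := by
    by_contra hBne
    have hBneR : ((B n).1 : ℝ) ≠ 0 := Int.cast_ne_zero.mpr hBne
    have h1 : ((A n).1 : ℝ) * p.1 + ((B n).1 : ℝ) * p.2 = p.1 := by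
      rw [← (hrep n).1, hqn]
    apply hirr ((1 - (A n).1 : ℤ) / ((B n).1 : ℤ) : ℚ)
    have hane : p.1 ≠ 0 := ne_of_gt hp.1
    push_cast
    rw [div_eq_div_iff hane hBneR]
    linear_combination h1
  set r : ℕ → ℝ := fun i => ((B i).1 : ℝ) / (q i).1 with hr
  have hmono : ∀ i, r i < r (i + 1) := by
    intro i
    have e1 : (q (i + 1)).1 = (q i).2 := by rw [hstep i]
    have e2 : ((B (i + 1)).1 : ℝ) = ((B i).2 : ℝ) := by simp [hB, solSeq]
    simp only [hr]
    rw [e1, e2, div_lt_div_iff₀ (hpos1 i) (hpos2 i)]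
    nlinarith [hW i, hp.1]
  have hsm : StrictMono r := strictMono_nat_of_lt_succ hmono
  have h0 : r 0 = 0 := by simp [hr, hB, solSeq]
  have hn' : r n = 0 := by simp [hr, hBn]
  have := hsm hn
  rw [h0, hn'] at this
  exact lt_irrefl 0 this

/-- A point of the Farey triangle with rational slope is periodic under the BCZ map. -/
lemma periodic_of_rat_slope {p : ℝ × ℝ} (hp : p ∈ FareyTriangle) (r : ℚ)
    (hr : p.2 / p.1 = (r : ℝ)) : ∃ n : ℕ, 0 < n ∧ bcz^[n] p = p := by
  have ha : 0 < p.1 := hp.1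
  have hb : 0 < p.2 := hp.2.2.1
  set t : ℝ := p.1 / (r.den : ℝ) with ht
  have hden : (0 : ℝ) < (r.den : ℝ) := by exact_mod_cast r.pos
  have htpos : 0 < t := div_pos ha hden
  have hp1 : p.1 = ((r.den : ℤ) : ℝ) * t := by
    rw [ht]; push_cast; field_simp
  have hp2 : p.2 = ((r.num : ℤ) : ℝ) * t := by
    have hcast : (r : ℝ) = (r.num : ℝ) / (r.den : ℝ) := by rw [Rat.cast_def]
    have hb' : p.2 = (r : ℝ) * p.1 := by
      rw [← hr]; field_simp
    rw [hb', hcast, ht]; field_simp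
  set S : Set (ℝ × ℝ) :=
    {w | w ∈ FareyTriangle ∧ ∃ m n : ℤ, w.1 = (m : ℝ) * t ∧ w.2 = (n : ℝ) * t} with hS
  have hmaps : Set.MapsTo bcz S S := by
    rintro w ⟨hw, m, n, h1, h2⟩
    refine ⟨bcz_mem hw, n, ⌊(1 + w.1) / w.2⌋ * n - m, h2, ?_⟩
    simp only [bcz]
    push_cast
    rw [h1, h2]; ring
  have hfin : S.Finite := by
    have hsub : S ⊆ (fun mn : ℤ × ℤ => ((mn.1 : ℝ) * t, (mn.2 : ℝ) * t)) ''
        (Set.Icc 1 ⌈1 / t⌉ ×ˢ Set.Icc 1 ⌈1 / t⌉) := by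
      rintro w ⟨hw, m, n, h1, h2⟩
      have key : ∀ (z : ℤ) (c : ℝ), 0 < c → c ≤ 1 → c = (z : ℝ) * t →
          z ∈ Set.Icc 1 ⌈1 / t⌉ := by
        intro z c hc0 hc1 hceq
        constructor
        · have : (0 : ℝ) < (z : ℝ) := by
            by_contra hcon
            push_neg at hcon
            nlinarith
          have hz : (0 : ℤ) < z := by exact_mod_cast this
          omega
        · have h1t : (z : ℝ) ≤ 1 / t := by
            rw [le_div_iff₀ htpos]; nlinarith
          have := le_trans h1t (Int.le_ceil (1 / t))
          exact_mod_cast this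
      refine ⟨(m, n), ⟨key m w.1 hw.1 hw.2.1 h1, key n w.2 hw.2.2.1 hw.2.2.2.1 h2⟩, ?_⟩
      rw [Prod.ext_iff]
      exact ⟨h1.symm, h2.symm⟩
    exact (((Set.finite_Icc _ _).prod (Set.finite_Icc _ _)).image _).subset hsub
  have hpS : p ∈ S := ⟨hp, (r.den : ℤ), r.num, hp1, hp2⟩
  have hiter : ∀ i : ℕ, bcz^[i] p ∈ S := by
    intro i
    induction i with
    | zero => exact hpS
    | succ i ih =>
      rw [Function.iterate_succ_apply']
      exact hmaps ih
  obtain ⟨i, -, j, -, hij, heq⟩ :=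
    Set.infinite_univ.exists_ne_map_eq_of_mapsTo
      (f := fun i : ℕ => bcz^[i] p) (fun i _ => hiter i) hfin
  obtain ⟨i, j, hlt, heq⟩ : ∃ i j : ℕ, i < j ∧ bcz^[i] p = bcz^[j] p := by
    rcases hij.lt_or_gt with h | h
    · exact ⟨i, j, h, heq⟩
    · exact ⟨j, i, h, heq.symm⟩
  refine ⟨j - i, Nat.sub_pos_of_lt hlt, ?_⟩
  have hj : j = i + (j - i) := by omega
  rw [hj, Function.iterate_add_apply] at heq
  exact (bcz_iterate_injOn i (hiter (j - i)).1 hp heq.symm)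

theorem bcz_periodic_iff_rational_slope :
    (∀ p ∈ FareyTriangle,
      (∃ n : ℕ, 0 < n ∧ bcz^[n] p = p) ↔ ∃ r : ℚ, p.2 / p.1 = (r : ℝ)) ∧
    FareyTriangle ⊆
      closure {p ∈ FareyTriangle | ∃ n : ℕ, 0 < n ∧ bcz^[n] p = p} := by
  constructor
  · intro p hp
    constructor
    · rintro ⟨n, hn, hper⟩
      exact rat_slope_of_periodic hp hn hper
    · rintro ⟨r, hr⟩
      exact periodic_of_rat_slope hp r hr
  · intro p hp
    obtain ⟨h1, h2, h3, h4, h5⟩ := hp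
    rw [Metric.mem_closure_iff]
    intro ε hε
    set δ : ℝ := min ε (min (p.1 + p.2 - 1) p.2) / 2 with hδ
    have hδpos : 0 < δ := by
      apply div_pos _ (by norm_num)
      exact lt_min hε (lt_min (by linarith) h3)
    have hδε : δ < ε := by
      have : δ ≤ ε / 2 := by
        apply div_le_div_of_nonneg_right (min_le_left _ _) (by norm_num)
      linarith
    have hδab : δ < p.1 + p.2 - 1 := by
      have : δ ≤ (p.1 + p.2 - 1) / 2 := by
        apply div_le_div_of_nonneg_right (le_trans (min_le_right _ _) (min_le_left _ _))
          (by norm_num)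
      linarith
    have hδb : δ < p.2 := by
      have : δ ≤ p.2 / 2 := by
        apply div_le_div_of_nonneg_right (le_trans (min_le_right _ _) (min_le_right _ _))
          (by norm_num)
      linarith
    have hlt : (p.2 - δ) / p.1 < p.2 / p.1 := by
      rw [div_lt_div_iff₀ h1 h1]
      nlinarith
    obtain ⟨r, hr1, hr2⟩ := exists_rat_btwn hlt
    have hra1 : p.2 - δ < (r : ℝ) * p.1 := by
      rw [div_lt_iff₀ h1] at hr1; linarith
    have hra2 : (r : ℝ) * p.1 < p.2 := by
      rw [lt_div_iff₀ h1] at hr2; linarith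
    set w : ℝ × ℝ := (p.1, (r : ℝ) * p.1) with hw
    have hwF : w ∈ FareyTriangle :=
      ⟨h1, h2, by simp only [hw]; linarith, by simp only [hw]; linarith,
        by simp only [hw]; linarith⟩
    have hwslope : w.2 / w.1 = (r : ℝ) := by
      simp only [hw]
      exact mul_div_cancel_right₀ _ (ne_of_gt h1)
    refine ⟨w, ⟨hwF, periodic_of_rat_slope hwF r hwslope⟩, ?_⟩
    rw [Prod.dist_eq]
    apply max_lt
    · simp only [hw]; rw [dist_self]; exact hε
    · simp only [hw]
      rw [Real.dist_eq, abs_lt]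
      constructor <;> nlinarith
end
end

section
/- For every integer Q ≥ 1 and every real t with Q/(Q+1) < t ≤ 1, the point (t, t/Q) ∈ Ω is T-periodic with minimal period P(t, t/Q) = N(Q). -/
noncomputable section

namespace BCZAux

structure St where
  P : ℤ
  A : ℤ
  p : ℤ
  a : ℤ

def step (Q : ℕ) (s : St) : St :=
  ⟨s.p, s.a, ((Q : ℤ) + s.A) / s.a * s.p - s.P, ((Q : ℤ) + s.A) / s.a * s.a - s.A⟩

def seq (Q : ℕ) (i : ℕ) : St := (step Q)^[i] ⟨-1, (Q : ℤ), 0, 1⟩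

def Inv (Q : ℕ) (s : St) : Prop :=
  1 ≤ s.a ∧ s.a ≤ (Q : ℤ) ∧ 1 ≤ s.A ∧ s.A ≤ (Q : ℤ) ∧ (Q : ℤ) < s.A + s.a ∧
    s.p * s.A - s.P * s.a = 1

lemma seq_zero (Q : ℕ) : seq Q 0 = ⟨-1, (Q : ℤ), 0, 1⟩ := rfl

lemma seq_succ (Q i : ℕ) : seq Q (i + 1) = step Q (seq Q i) :=
  Function.iterate_succ_apply' _ _ _

lemma inv_step {Q : ℕ} (hQ : 1 ≤ Q) {s : St} (h : Inv Q s) : Inv Q (step Q s) := by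
  obtain ⟨ha1, haQ, hA1, hAQ, hsum, huni⟩ := h
  set k : ℤ := ((Q : ℤ) + s.A) / s.a with hk
  have ha0 : (0 : ℤ) < s.a := ha1
  have hk1 : k * s.a ≤ (Q : ℤ) + s.A := Int.ediv_mul_le _ (ne_of_gt ha0)
  have hk2 : (Q : ℤ) + s.A < (k + 1) * s.a := Int.lt_ediv_add_one_mul_self _ ha0
  refine ⟨?_, ?_, ha1, haQ, ?_, ?_⟩
  · show 1 ≤ k * s.a - s.A
    nlinarith
  · show k * s.a - s.A ≤ (Q : ℤ)
    simpa using hk1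
  · show (Q : ℤ) < s.a + (k * s.a - s.A)
    nlinarith
  · show (k * s.p - s.P) * s.a - s.p * (k * s.a - s.A) = 1
    linear_combination huni

lemma inv_seq {Q : ℕ} (hQ : 1 ≤ Q) (i : ℕ) : Inv Q (seq Q i) := by
  induction i with
  | zero =>
      rw [seq_zero]
      exact ⟨le_refl _, by show (1:ℤ) ≤ (Q:ℤ); exact_mod_cast hQ, by show (1:ℤ) ≤ (Q:ℤ); exact_mod_cast hQ, le_refl _,
        lt_add_one _, by norm_num⟩
  | succ n ih => rw [seq_succ]; exact inv_step hQ ih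


def x (Q i : ℕ) : ℚ := ((seq Q i).p : ℚ) / ((seq Q i).a : ℚ)

lemma adj_P (Q i : ℕ) : (seq Q (i + 1)).P = (seq Q i).p := by rw [seq_succ]; rfl

lemma adj_A (Q i : ℕ) : (seq Q (i + 1)).A = (seq Q i).a := by rw [seq_succ]; rfl

lemma uni_adj {Q : ℕ} (hQ : 1 ≤ Q) (i : ℕ) :
    (seq Q (i + 1)).p * (seq Q i).a - (seq Q i).p * (seq Q (i + 1)).a = 1 := by
  have h := (inv_seq hQ (i + 1)).2.2.2.2.2
  rwa [adj_P, adj_A] at h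

lemma x_diff {Q : ℕ} (hQ : 1 ≤ Q) (i : ℕ) :
    x Q (i + 1) - x Q i = 1 / (((seq Q i).a : ℚ) * ((seq Q (i + 1)).a : ℚ)) := by
  have ha : (0 : ℚ) < ((seq Q i).a : ℚ) := by exact_mod_cast (inv_seq hQ i).1
  have ha' : (0 : ℚ) < ((seq Q (i + 1)).a : ℚ) := by exact_mod_cast (inv_seq hQ (i + 1)).1
  have h : ((seq Q (i + 1)).p : ℚ) * ((seq Q i).a : ℚ)
      - ((seq Q i).p : ℚ) * ((seq Q (i + 1)).a : ℚ) = 1 := by exact_mod_cast uni_adj hQ i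
  rw [x, x]
  field_simp
  linear_combination h

lemma x_strictMono {Q : ℕ} (hQ : 1 ≤ Q) : StrictMono (x Q) := by
  apply strictMono_nat_of_lt_succ
  intro i
  have ha : (0 : ℚ) < ((seq Q i).a : ℚ) := by exact_mod_cast (inv_seq hQ i).1
  have ha' : (0 : ℚ) < ((seq Q (i + 1)).a : ℚ) := by exact_mod_cast (inv_seq hQ (i + 1)).1
  have h := x_diff hQ i
  have : (0 : ℚ) < 1 / (((seq Q i).a : ℚ) * ((seq Q (i + 1)).a : ℚ)) := by positivity
  linarith

lemma x_zero (Q : ℕ) : x Q 0 = 0 := by simp [x, seq_zero]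

lemma x_growth {Q : ℕ} (hQ : 1 ≤ Q) (i : ℕ) : (i : ℚ) ≤ x Q i * (Q * Q) := by
  have hQ0 : (0 : ℚ) < (Q : ℚ) := by exact_mod_cast hQ
  induction i with
  | zero => simp [x_zero]
  | succ n ih =>
      have ha : (0 : ℚ) < ((seq Q n).a : ℚ) := by exact_mod_cast (inv_seq hQ n).1
      have ha' : (0 : ℚ) < ((seq Q (n + 1)).a : ℚ) := by exact_mod_cast (inv_seq hQ (n + 1)).1
      have haQ : ((seq Q n).a : ℚ) ≤ (Q : ℚ) := by exact_mod_cast (inv_seq hQ n).2.1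
      have haQ' : ((seq Q (n + 1)).a : ℚ) ≤ (Q : ℚ) := by exact_mod_cast (inv_seq hQ (n + 1)).2.1
      have hle : ((seq Q n).a : ℚ) * ((seq Q (n + 1)).a : ℚ) ≤ (Q : ℚ) * Q :=
        mul_le_mul haQ haQ' ha'.le hQ0.le
      have h1 : (1 : ℚ) / ((Q : ℚ) * Q) ≤ 1 / (((seq Q n).a : ℚ) * ((seq Q (n + 1)).a : ℚ)) :=
        one_div_le_one_div_of_le (by positivity) hle
      have hd := x_diff hQ n
      have : x Q n + 1 / ((Q : ℚ) * Q) ≤ x Q (n + 1) := by linarith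
      have hmul : (x Q n + 1 / ((Q : ℚ) * Q)) * (Q * Q) ≤ x Q (n + 1) * (Q * Q) := by
        apply mul_le_mul_of_nonneg_right this (by positivity)
      have hQQ : (1 : ℚ) / ((Q : ℚ) * Q) * (Q * Q) = 1 := by field_simp
      push_cast
      nlinarith
  
lemma exists_one_le {Q : ℕ} (hQ : 1 ≤ Q) : ∃ i, 1 ≤ x Q i := by
  refine ⟨Q * Q, ?_⟩
  have := x_growth hQ (Q * Q)
  have hQ0 : (0 : ℚ) < (Q : ℚ) * Q := by
    have : (0 : ℚ) < (Q : ℚ) := by exact_mod_cast hQ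
    positivity
  have h : ((Q * Q : ℕ) : ℚ) = (Q : ℚ) * Q := by push_cast; ring
  rw [h] at this
  nlinarith

/-- The index `N'` at which the sequence `x` first reaches 1. -/
def NN (Q : ℕ) (hQ : 1 ≤ Q) : ℕ := Nat.find (exists_one_le hQ)

lemma gap {Q : ℕ} {pp a p' a' : ℤ} (ha : 0 < a) (ha' : 0 < a')
    (h1 : p' * a - pp * a' = 1) (hsum : (Q : ℤ) < a + a') {r : ℚ}
    (h2 : (pp : ℚ) / a < r) (h3 : r < (p' : ℚ) / a') : (Q : ℤ) < (r.den : ℤ) := by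
  set u : ℤ := r.num
  set v : ℤ := (r.den : ℤ) with hv
  have hv0 : (0 : ℤ) < v := by rw [hv]; exact_mod_cast r.pos
  have hr : r = (u : ℚ) / (v : ℚ) := by
    rw [hv]; push_cast; exact (Rat.num_div_den r).symm
  have haQ : (0 : ℚ) < (a : ℚ) := by exact_mod_cast ha
  have haQ' : (0 : ℚ) < (a' : ℚ) := by exact_mod_cast ha'
  have hvQ : (0 : ℚ) < (v : ℚ) := by exact_mod_cast hv0
  rw [hr] at h2 h3
  rw [div_lt_div_iff₀ haQ hvQ] at h2
  rw [div_lt_div_iff₀ hvQ haQ'] at h3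
  have h2' : pp * v < u * a := by exact_mod_cast h2
  have h3' : u * a' < p' * v := by exact_mod_cast h3
  have hA : 1 ≤ u * a - pp * v := by linarith [Int.add_one_le_iff.mpr h2']
  have hB : 1 ≤ p' * v - u * a' := by linarith [Int.add_one_le_iff.mpr h3']
  have e : v = a * (p' * v - u * a') + a' * (u * a - pp * v) := by
    linear_combination (-v) * h1
  nlinarith


lemma NN_pos {Q : ℕ} (hQ : 1 ≤ Q) : 0 < NN Q hQ := by
  rcases Nat.eq_zero_or_pos (NN Q hQ) with h | h
  · exfalso
    have := Nat.find_spec (exists_one_le hQ)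
    rw [show NN Q hQ = Nat.find (exists_one_le hQ) from rfl] at h
    rw [h, x_zero] at this
    norm_num at this
  · exact h

lemma x_lt_one {Q : ℕ} (hQ : 1 ≤ Q) {i : ℕ} (h : i < NN Q hQ) : x Q i < 1 :=
  lt_of_not_ge (Nat.find_min (exists_one_le hQ) h)

lemma one_le_x_NN {Q : ℕ} (hQ : 1 ≤ Q) : 1 ≤ x Q (NN Q hQ) :=
  Nat.find_spec (exists_one_le hQ)

lemma x_NN_eq_one {Q : ℕ} (hQ : 1 ≤ Q) : x Q (NN Q hQ) = 1 := by
  rcases eq_or_lt_of_le (one_le_x_NN hQ) with h | h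
  · exact h.symm
  exfalso
  obtain ⟨j, hj⟩ := Nat.exists_eq_succ_of_ne_zero (Nat.pos_iff_ne_zero.mp (NN_pos hQ))
  have haj : (0 : ℤ) < (seq Q j).a := (inv_seq hQ j).1
  have haN : (0 : ℤ) < (seq Q (j + 1)).a := (inv_seq hQ (j + 1)).1
  have h1 := uni_adj hQ j
  have hsum : (Q : ℤ) < (seq Q j).a + (seq Q (j + 1)).a := by
    have := (inv_seq hQ (j + 1)).2.2.2.2.1
    rwa [adj_A] at this
  have h2 : ((seq Q j).p : ℚ) / ((seq Q j).a : ℚ) < 1 := by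
    have := x_lt_one hQ (i := j) (by omega)
    rwa [x] at this
  have h3 : (1 : ℚ) < ((seq Q (j + 1)).p : ℚ) / ((seq Q (j + 1)).a : ℚ) := by
    rw [hj] at h; rwa [x] at h
  have := gap (Q := Q) haj haN h1 hsum h2 h3
  have hden : ((1 : ℚ)).den = 1 := rfl
  rw [hden] at this
  exact absurd this (by exact_mod_cast Nat.not_lt.mpr hQ)

lemma a_NN {Q : ℕ} (hQ : 1 ≤ Q) : (seq Q (NN Q hQ)).a = 1 := by
  have hx := x_NN_eq_one hQ
  have ha : (0 : ℤ) < (seq Q (NN Q hQ)).a := (inv_seq hQ (NN Q hQ)).1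
  have haQ : ((seq Q (NN Q hQ)).a : ℚ) ≠ 0 := by positivity
  have hpa : (seq Q (NN Q hQ)).p = (seq Q (NN Q hQ)).a := by
    have h : ((seq Q (NN Q hQ)).p : ℚ) = ((seq Q (NN Q hQ)).a : ℚ) := by
      rw [x] at hx
      field_simp at hx
      exact_mod_cast hx
    exact_mod_cast h
  have huni := (inv_seq hQ (NN Q hQ)).2.2.2.2.2
  rw [hpa] at huni
  have hdvd : (seq Q (NN Q hQ)).a ∣ 1 :=
    ⟨(seq Q (NN Q hQ)).A - (seq Q (NN Q hQ)).P, by linear_combination -huni⟩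
  have := Int.le_of_dvd one_pos hdvd
  omega

lemma A_NN {Q : ℕ} (hQ : 1 ≤ Q) : (seq Q (NN Q hQ)).A = (Q : ℤ) := by
  have h1 := (inv_seq hQ (NN Q hQ)).2.2.2.1
  have h2 := (inv_seq hQ (NN Q hQ)).2.2.2.2.1
  have h3 := a_NN hQ
  omega

lemma p_nonneg {Q : ℕ} (hQ : 1 ≤ Q) (i : ℕ) : 0 ≤ (seq Q i).p := by
  have hx : 0 ≤ x Q i := by
    rcases Nat.eq_zero_or_pos i with h | h
    · rw [h, x_zero]
    · have := (x_strictMono hQ) h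
      rw [x_zero] at this
      exact this.le
  have ha : (0 : ℚ) < ((seq Q i).a : ℚ) := by exact_mod_cast (inv_seq hQ i).1
  rw [x] at hx
  have := (div_nonneg_iff.mp hx)
  rcases this with ⟨h, _⟩ | ⟨_, h⟩
  · exact_mod_cast h
  · exact absurd h (not_le.mpr ha)

lemma p_lt_a_of_lt {Q : ℕ} (hQ : 1 ≤ Q) {i : ℕ} (h : i < NN Q hQ) :
    (seq Q i).p < (seq Q i).a := by
  have hx := x_lt_one hQ h
  have ha : (0 : ℚ) < ((seq Q i).a : ℚ) := by exact_mod_cast (inv_seq hQ i).1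
  rw [x, div_lt_one ha] at hx
  exact_mod_cast hx

lemma coprime_pa {Q : ℕ} (hQ : 1 ≤ Q) (i : ℕ) :
    Nat.Coprime (seq Q i).a.toNat (seq Q i).p.toNat := by
  have huni := (inv_seq hQ i).2.2.2.2.2
  have hco : IsCoprime (seq Q i).p (seq Q i).a :=
    ⟨(seq Q i).A, -(seq Q i).P, by linear_combination huni⟩
  have h2 : Nat.gcd (seq Q i).p.natAbs (seq Q i).a.natAbs = 1 :=
    Int.isCoprime_iff_gcd_eq_one.mp hco
  have hp := p_nonneg hQ i
  have ha := (inv_seq hQ i).1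
  have e1 : (seq Q i).p.natAbs = (seq Q i).p.toNat := by omega
  have e2 : (seq Q i).a.natAbs = (seq Q i).a.toNat := by omega
  unfold Nat.Coprime
  rw [Nat.gcd_comm, ← e1, ← e2]
  exact h2

/-- The Farey fractions of order `Q` in `[0,1)`, as a finset of rationals. -/
def FF (Q : ℕ) : Finset ℚ :=
  (Finset.Icc 1 Q).biUnion fun q =>
    ((Finset.range q).filter q.Coprime).image fun p : ℕ => (p : ℚ) / (q : ℚ)

lemma den_div {q p : ℕ} (hq : 0 < q) (hcop : q.Coprime p) : ((p : ℚ) / (q : ℚ)).den = q := by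
  have h := Rat.den_div_eq_of_coprime (a := (p : ℤ)) (b := (q : ℤ)) (by exact_mod_cast hq)
    (by simpa [Int.natAbs_natCast] using hcop.symm)
  rw [show ((p : ℚ)) = ((p : ℤ) : ℚ) by push_cast; rfl,
    show ((q : ℚ)) = ((q : ℤ) : ℚ) by push_cast; rfl]
  exact_mod_cast h

lemma card_FF (Q : ℕ) : (FF Q).card = ∑ q ∈ Finset.Icc 1 Q, Nat.totient q := by
  rw [FF, Finset.card_biUnion]
  · apply Finset.sum_congr rfl
    intro q hq
    have hq1 : 1 ≤ q := (Finset.mem_Icc.mp hq).1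
    rw [Nat.totient_eq_card_coprime]
    apply Finset.card_image_of_injOn
    intro p hp p' hp' h
    have hq0 : ((q : ℚ)) ≠ 0 := by positivity
    field_simp at h
    exact_mod_cast h
  · intro q hq q' hq' hne
    rw [Function.onFun, Finset.disjoint_left]
    intro r hr hr'
    obtain ⟨p, hp, hpe⟩ := Finset.mem_image.mp hr
    obtain ⟨p', hp', hpe'⟩ := Finset.mem_image.mp hr'
    have hq1 : 1 ≤ q := (Finset.mem_Icc.mp hq).1
    have hq1' : 1 ≤ q' := (Finset.mem_Icc.mp hq').1
    have h1 : r.den = q := by rw [← hpe]; exact den_div hq1 (Finset.mem_filter.mp hp).2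
    have h1' : r.den = q' := by rw [← hpe']; exact den_div hq1' (Finset.mem_filter.mp hp').2
    exact hne (h1.symm.trans h1')

lemma x_mem_FF {Q : ℕ} (hQ : 1 ≤ Q) {i : ℕ} (h : i < NN Q hQ) : x Q i ∈ FF Q := by
  have ha1 : (1 : ℤ) ≤ (seq Q i).a := (inv_seq hQ i).1
  have haQ : (seq Q i).a ≤ (Q : ℤ) := (inv_seq hQ i).2.1
  have hp0 := p_nonneg hQ i
  have hpa := p_lt_a_of_lt hQ h
  have hq1 : 1 ≤ (seq Q i).a.toNat := by omega
  have hqQ : (seq Q i).a.toNat ≤ Q := by omega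
  have hpq : (seq Q i).p.toNat < (seq Q i).a.toNat := by omega
  apply Finset.mem_biUnion.mpr
  refine ⟨(seq Q i).a.toNat, Finset.mem_Icc.mpr ⟨hq1, hqQ⟩, ?_⟩
  apply Finset.mem_image.mpr
  refine ⟨(seq Q i).p.toNat,
    Finset.mem_filter.mpr ⟨Finset.mem_range.mpr hpq, coprime_pa hQ i⟩, ?_⟩
  have e1 : (((seq Q i).p.toNat : ℚ)) = ((seq Q i).p : ℚ) := by
    exact_mod_cast congrArg (fun z : ℤ => (z : ℚ)) (Int.toNat_of_nonneg hp0)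
  have e2 : (((seq Q i).a.toNat : ℚ)) = ((seq Q i).a : ℚ) := by
    exact_mod_cast congrArg (fun z : ℤ => (z : ℚ)) (Int.toNat_of_nonneg (by omega : (0:ℤ) ≤ (seq Q i).a))
  rw [x, e1, e2]

lemma mem_FF_eq_x {Q : ℕ} (hQ : 1 ≤ Q) {r : ℚ} (hr : r ∈ FF Q) :
    ∃ i, i < NN Q hQ ∧ x Q i = r := by
  obtain ⟨q, hq, hr2⟩ := Finset.mem_biUnion.mp hr
  obtain ⟨p, hp, hpr⟩ := Finset.mem_image.mp hr2
  obtain ⟨hq1, hqQ⟩ := Finset.mem_Icc.mp hq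
  have hpq : p < q := Finset.mem_range.mp (Finset.mem_filter.mp hp).1
  have hcop : q.Coprime p := (Finset.mem_filter.mp hp).2
  have hqQ0 : (0 : ℚ) < (q : ℚ) := by exact_mod_cast hq1
  have hr0 : (0 : ℚ) ≤ (p : ℚ) / (q : ℚ) := by positivity
  have hr1 : (p : ℚ) / (q : ℚ) < 1 := by
    rw [div_lt_one hqQ0]; exact_mod_cast hpq
  have hden : ((p : ℚ) / (q : ℚ)).den = q := den_div (by omega) hcop
  subst hpr
  set r := (p : ℚ) / (q : ℚ) with hrdef
  have hlt : r < x Q (NN Q hQ) := by rw [x_NN_eq_one hQ]; exact hr1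
  have hexj : ∃ j, r < x Q j := ⟨_, hlt⟩
  have hjN : Nat.find hexj ≤ NN Q hQ := Nat.find_min' hexj hlt
  have hj0 : Nat.find hexj ≠ 0 := by
    intro h0
    have hs := Nat.find_spec hexj
    rw [h0, x_zero] at hs
    linarith
  obtain ⟨j', hj'⟩ : ∃ j', Nat.find hexj = j' + 1 := ⟨Nat.find hexj - 1, by omega⟩
  have hle : x Q j' ≤ r := not_lt.mp (Nat.find_min hexj (by omega))
  have hltj : r < x Q (j' + 1) := by rw [← hj']; exact Nat.find_spec hexj
  rcases eq_or_lt_of_le hle with heq | hlt2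
  · exact ⟨j', by omega, heq⟩
  · exfalso
    have haj : (0 : ℤ) < (seq Q j').a := (inv_seq hQ j').1
    have haj' : (0 : ℤ) < (seq Q (j' + 1)).a := (inv_seq hQ (j' + 1)).1
    have h1 := uni_adj hQ j'
    have hsum : (Q : ℤ) < (seq Q j').a + (seq Q (j' + 1)).a := by
      have := (inv_seq hQ (j' + 1)).2.2.2.2.1
      rwa [adj_A] at this
    have h2 : ((seq Q j').p : ℚ) / ((seq Q j').a : ℚ) < r := by rw [← x]; exact hlt2
    have h3 : r < ((seq Q (j' + 1)).p : ℚ) / ((seq Q (j' + 1)).a : ℚ) := by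
      rw [← x]; exact hltj
    have hgap := gap (Q := Q) haj haj' h1 hsum h2 h3
    rw [hden] at hgap
    have : (q : ℤ) ≤ (Q : ℤ) := by exact_mod_cast hqQ
    omega

lemma image_x_eq_FF {Q : ℕ} (hQ : 1 ≤ Q) :
    (Finset.range (NN Q hQ)).image (x Q) = FF Q := by
  apply Finset.ext
  intro r
  constructor
  · intro h
    obtain ⟨i, hi, rfl⟩ := Finset.mem_image.mp h
    exact x_mem_FF hQ (Finset.mem_range.mp hi)
  · intro h
    obtain ⟨i, hiN, hxi⟩ := mem_FF_eq_x hQ h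
    exact Finset.mem_image.mpr ⟨i, Finset.mem_range.mpr hiN, hxi⟩

lemma NN_eq {Q : ℕ} (hQ : 1 ≤ Q) : NN Q hQ = ∑ q ∈ Finset.Icc 1 Q, Nat.totient q := by
  have h1 : ((Finset.range (NN Q hQ)).image (x Q)).card = NN Q hQ := by
    rw [Finset.card_image_of_injOn ((x_strictMono hQ).injective.injOn), Finset.card_range]
  rw [← h1, image_x_eq_FF hQ, card_FF]

lemma orbit {Q : ℕ} (hQ : 1 ≤ Q) {t : ℝ} (ht1 : (Q : ℝ) / (Q + 1) < t) (ht2 : t ≤ 1) (i : ℕ) :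
    bcz^[i] (t, t / Q) = (t * ((seq Q i).A : ℝ) / Q, t * ((seq Q i).a : ℝ) / Q) := by
  have hQ0 : (0 : ℝ) < (Q : ℝ) := by exact_mod_cast hQ
  have ht0 : (0 : ℝ) < t := lt_of_le_of_lt (by positivity) ht1
  induction i with
  | zero =>
      rw [Function.iterate_zero_apply, seq_zero]
      show (t, t / Q) = (t * ((Q : ℤ) : ℝ) / Q, t * ((1 : ℤ) : ℝ) / Q)
      push_cast
      rw [Prod.mk.injEq]
      constructor
      · field_simp
      · ring
  | succ n ih =>
      rw [Function.iterate_succ_apply', ih]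
      have ha : (0 : ℤ) < (seq Q n).a := (inv_seq hQ n).1
      have haR : (0 : ℝ) < ((seq Q n).a : ℝ) := by exact_mod_cast ha
      set k : ℤ := ((Q : ℤ) + (seq Q n).A) / (seq Q n).a with hkdef
      have hk1 : k * (seq Q n).a ≤ (Q : ℤ) + (seq Q n).A := Int.ediv_mul_le _ (ne_of_gt ha)
      have hk2 : (Q : ℤ) + (seq Q n).A < (k + 1) * (seq Q n).a :=
        Int.lt_ediv_add_one_mul_self _ ha
      have hk2' : (Q : ℤ) + (seq Q n).A + 1 ≤ (k + 1) * (seq Q n).a := hk2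
      have hsQ : (Q : ℝ) ≤ (Q : ℝ) / t := by
        rw [le_div_iff₀ ht0]; nlinarith
      have hsQ1 : (Q : ℝ) / t < (Q : ℝ) + 1 := by
        rw [div_lt_iff₀ ht0]
        have := (div_lt_iff₀ (by positivity : (0:ℝ) < (Q : ℝ) + 1)).mp ht1
        linarith
      have hval : (1 + t * ((seq Q n).A : ℝ) / Q) / (t * ((seq Q n).a : ℝ) / Q)
          = ((Q : ℝ) / t + ((seq Q n).A : ℝ)) / ((seq Q n).a : ℝ) := by
        field_simp
      have hfloor : ⌊(1 + t * ((seq Q n).A : ℝ) / Q) / (t * ((seq Q n).a : ℝ) / Q)⌋ = k := by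
        rw [hval]
        apply Int.floor_eq_iff.mpr
        constructor
        · rw [le_div_iff₀ haR]
          have hk1R : (k : ℝ) * ((seq Q n).a : ℝ) ≤ (Q : ℝ) + ((seq Q n).A : ℝ) := by
            exact_mod_cast hk1
          linarith
        · rw [div_lt_iff₀ haR]
          have hk2R : (Q : ℝ) + ((seq Q n).A : ℝ) + 1
              ≤ ((k : ℝ) + 1) * ((seq Q n).a : ℝ) := by exact_mod_cast hk2'
          push_cast
          linarith
      have hstep : seq Q (n + 1) = step Q (seq Q n) := seq_succ Q n
      have hA' : ((seq Q (n + 1)).A : ℝ) = ((seq Q n).a : ℝ) := by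
        rw [adj_A]
      have ha' : (seq Q (n + 1)).a = k * (seq Q n).a - (seq Q n).A := by
        rw [hstep]; rfl
      rw [bcz]
      simp only [Prod.fst, Prod.snd]
      rw [hfloor, Prod.mk.injEq]
      constructor
      · rw [hA']
      · rw [ha']
        push_cast
        field_simp
        ring

end BCZAux

theorem bcz_period_of_farey_segment (Q : ℕ) (hQ : 1 ≤ Q) (t : ℝ)
    (ht1 : (Q : ℝ) / (Q + 1) < t) (ht2 : t ≤ 1) :
    (t, t / Q) ∈ FareyTriangle ∧
    Function.IsPeriodicPt bcz (NFarey Q) (t, t / Q) ∧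
    Function.minimalPeriod bcz (t, t / Q) = NFarey Q := by
  have hQ0 : (0 : ℝ) < (Q : ℝ) := by exact_mod_cast hQ
  have hQ1 : (1 : ℝ) ≤ (Q : ℝ) := by exact_mod_cast hQ
  have ht0 : (0 : ℝ) < t := lt_of_le_of_lt (by positivity) ht1
  have htQ : (Q : ℝ) < t * ((Q : ℝ) + 1) :=
    (div_lt_iff₀ (by positivity : (0:ℝ) < (Q : ℝ) + 1)).mp ht1
  have hmem : (t, t / Q) ∈ FareyTriangle := by
    refine ⟨ht0, ht2, by positivity, ?_, ?_⟩
    · rw [div_le_one hQ0]; linarith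
    · show 1 < t + t / Q
      rw [← sub_pos]
      have : t + t / Q - 1 = (t * ((Q : ℝ) + 1) - Q) / Q := by field_simp
      rw [this]
      apply div_pos (by linarith) hQ0
  have hNF : NFarey Q = BCZAux.NN Q hQ := (BCZAux.NN_eq hQ).symm
  have hper : Function.IsPeriodicPt bcz (BCZAux.NN Q hQ) (t, t / Q) := by
    show bcz^[BCZAux.NN Q hQ] (t, t / Q) = (t, t / Q)
    rw [BCZAux.orbit hQ ht1 ht2, BCZAux.A_NN hQ, BCZAux.a_NN hQ]
    rw [Prod.mk.injEq]
    constructor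
    · push_cast; field_simp
    · push_cast; ring
  have hNpos := BCZAux.NN_pos hQ
  refine ⟨hmem, by rw [hNF]; exact hper, ?_⟩
  rw [hNF]
  set m := Function.minimalPeriod bcz (t, t / Q) with hmdef
  have hmpos : 0 < m := hper.minimalPeriod_pos hNpos
  have hmle : m ≤ BCZAux.NN Q hQ := hper.minimalPeriod_le hNpos
  have hm : bcz^[m] (t, t / Q) = (t, t / Q) :=
    Function.isPeriodicPt_minimalPeriod bcz _
  rw [BCZAux.orbit hQ ht1 ht2 m, Prod.mk.injEq] at hm
  have ham : ((BCZAux.seq Q m).a : ℝ) = 1 := by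
    have h2 := hm.2
    have h3 : t * ((BCZAux.seq Q m).a : ℝ) = t * 1 := by
      have h4 := congrArg (fun z : ℝ => z * (Q : ℝ)) h2
      simp only [div_mul_cancel₀ _ (ne_of_gt hQ0)] at h4
      rw [h4, mul_one]
    exact mul_left_cancel₀ (ne_of_gt ht0) h3
  have hamZ : (BCZAux.seq Q m).a = 1 := by exact_mod_cast ham
  rcases eq_or_lt_of_le hmle with h | h
  · exact h
  · exfalso
    have hx1 : BCZAux.x Q m < 1 := BCZAux.x_lt_one hQ h
    have hx0 : 0 < BCZAux.x Q m := by
      have := (BCZAux.x_strictMono hQ) hmpos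
      rwa [BCZAux.x_zero] at this
    rw [BCZAux.x, hamZ] at hx1 hx0
    push_cast at hx1 hx0
    rw [div_one] at hx1 hx0
    have h1 : 0 < (BCZAux.seq Q m).p := by exact_mod_cast hx0
    have h2 : (BCZAux.seq Q m).p < 1 := by exact_mod_cast hx1
    omega
end
end

section
/- Let k ≤ l be coprime positive integers, let r be an integer with 1 ≤ r ≤ k, and let a be a real number with l/(l+r) < a ≤ l/(l+r−1). Then the point (a, a·k/l) ∈ Ω is T-periodic with minimal period P(a, a·k/l) = N(l + r − 1). -/
noncomputable section

namespace BCZAux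

/-- Farey fractions of order `Q` in `[0,1)`, as a finset of rationals. -/
def G (Q : ℕ) : Finset ℚ :=
  (Finset.Icc 1 Q).biUnion fun q => ((Finset.range q).filter q.Coprime).image fun p : ℕ => (p : ℚ) / q

lemma den_num_mk (p q : ℕ) (hq : 0 < q) (h : q.Coprime p) :
    ((p : ℚ) / q).den = q ∧ ((p : ℚ) / q).num = p := by
  have hb0 : (0 : ℤ) < (q : ℤ) := by exact_mod_cast hq
  have hcop : Nat.Coprime (p : ℤ).natAbs (q : ℤ).natAbs := by
    simpa [Int.natAbs_natCast] using h.symm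
  have h1 := Rat.den_div_eq_of_coprime hb0 hcop
  have h2 := Rat.num_div_eq_of_coprime hb0 hcop
  push_cast at h1 h2 ⊢
  exact ⟨by exact_mod_cast h1, h2⟩

lemma mem_G_iff {Q : ℕ} {x : ℚ} : x ∈ G Q ↔ 0 ≤ x ∧ x < 1 ∧ x.den ≤ Q := by
  constructor
  · rintro hx
    simp only [G, Finset.mem_biUnion, Finset.mem_image, Finset.mem_filter,
      Finset.mem_range, Finset.mem_Icc] at hx
    obtain ⟨q, ⟨hq1, hq2⟩, p, ⟨hpq, hcop⟩, rfl⟩ := hx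
    have hq0 : (0 : ℚ) < q := by exact_mod_cast hq1
    obtain ⟨hden, -⟩ := den_num_mk p q hq1 hcop
    refine ⟨by positivity, ?_, by omega⟩
    rw [div_lt_one hq0]
    exact_mod_cast hpq
  · rintro ⟨h0, h1, hden⟩
    simp only [G, Finset.mem_biUnion, Finset.mem_image, Finset.mem_filter,
      Finset.mem_range, Finset.mem_Icc]
    refine ⟨x.den, ⟨x.pos, hden⟩, x.num.toNat, ⟨?_, ?_⟩, ?_⟩
    · have hdpos : (0:ℚ) < (x.den : ℚ) := by exact_mod_cast x.pos
      have : (x.num : ℚ) < (x.den : ℚ) := by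
        rw [← Rat.num_div_den x] at h1
        exact (div_lt_one hdpos).mp h1
      have h2 : x.num < (x.den : ℤ) := by exact_mod_cast this
      have hnn : 0 ≤ x.num := Rat.num_nonneg.mpr h0
      omega
    · have hnn : 0 ≤ x.num := Rat.num_nonneg.mpr h0
      have hred := x.reduced
      have : x.num.natAbs = x.num.toNat := by omega
      rw [this] at hred
      exact hred.symm
    · have hnn : 0 ≤ x.num := Rat.num_nonneg.mpr h0
      rw [show ((x.num.toNat : ℕ) : ℚ) = (x.num : ℚ) by exact_mod_cast Int.toNat_of_nonneg hnn]
      exact (Rat.num_div_den x)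

lemma den_of_mem_block {q : ℕ} (hq : 1 ≤ q) {x : ℚ}
    (hx : x ∈ ((Finset.range q).filter q.Coprime).image fun p : ℕ => (p : ℚ) / q) :
    x.den = q := by
  simp only [Finset.mem_image, Finset.mem_filter, Finset.mem_range] at hx
  obtain ⟨p, ⟨-, hcop⟩, rfl⟩ := hx
  exact (den_num_mk p q hq hcop).1

lemma card_G (Q : ℕ) : (G Q).card = ∑ q ∈ Finset.Icc 1 Q, Nat.totient q := by
  rw [G, Finset.card_biUnion]
  · refine Finset.sum_congr rfl fun q hq => ?_
    have hq1 : 1 ≤ q := (Finset.mem_Icc.mp hq).1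
    have hq0 : (q : ℚ) ≠ 0 := by positivity
    rw [Finset.card_image_of_injOn, Nat.totient_eq_card_coprime]
    intro p1 _ p2 _ h
    rw [div_eq_div_iff hq0 hq0] at h
    have : (p1 : ℚ) = p2 := mul_right_cancel₀ hq0 h
    exact_mod_cast this
  · intro q1 h1 q2 h2 hne
    rw [Function.onFun, Finset.disjoint_left]
    intro x hx1 hx2
    have e1 := den_of_mem_block (Finset.mem_Icc.mp h1).1 hx1
    have e2 := den_of_mem_block (Finset.mem_Icc.mp h2).1 hx2
    exact hne (e1 ▸ e2 ▸ rfl)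

lemma zero_mem_G {Q : ℕ} (hQ : 1 ≤ Q) : (0 : ℚ) ∈ G Q := by
  rw [mem_G_iff]
  exact ⟨le_refl 0, by norm_num, by simpa using hQ⟩

end BCZAux


namespace Part2
open BCZAux
/-- successor map on `G Q`, cyclic. -/
noncomputable def nxt (Q : ℕ) (x : ℚ) : ℚ :=
  if h : ((G Q).filter (x < ·)).Nonempty then ((G Q).filter (x < ·)).min' h
  else if h2 : (G Q).Nonempty then (G Q).min' h2 else 0

def Good (Q : ℕ) (x : ℚ) (u v : ℕ) : Prop :=
  x ∈ G Q ∧ x.den = u ∧ 1 ≤ v ∧ v ≤ Q ∧ Q < u + v ∧ (u : ℤ) ∣ v * x.num + 1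

lemma w_facts {Q u v : ℕ} (hu1 : 1 ≤ u) (huQ : u ≤ Q) (hv1 : 1 ≤ v) (hvQ : v ≤ Q)
    (huv : Q < u + v) :
    u ≤ (Q + u) / v * v ∧ (Q + u) / v * v ≤ Q + u ∧ Q + u < (Q + u) / v * v + v ∧
      1 ≤ (Q + u) / v * v - u ∧ (Q + u) / v * v - u ≤ Q ∧ Q < v + ((Q + u) / v * v - u) := by
  have e1 : (Q + u) / v * v ≤ Q + u := Nat.div_mul_le_self _ _
  have e2 : Q + u < (Q + u) / v * v + v := Nat.lt_div_mul_add hv1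
  generalize (Q + u) / v * v = M at e1 e2 ⊢
  omega

lemma good_mem_facts {Q : ℕ} {x : ℚ} {u v : ℕ} (h : Good Q x u v) :
    1 ≤ u ∧ u ≤ Q ∧ 0 ≤ x.num ∧ x.num < u := by
  obtain ⟨hxG, hden, -⟩ := h
  obtain ⟨h0, h1, hdQ⟩ := mem_G_iff.mp hxG
  have hnn : 0 ≤ x.num := Rat.num_nonneg.mpr h0
  have hdpos : (0:ℚ) < (x.den : ℚ) := by exact_mod_cast x.pos
  have hlt : (x.num : ℚ) < (x.den : ℚ) := by
    rw [← Rat.num_div_den x] at h1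
    exact (div_lt_one hdpos).mp h1
  have hlt' : x.num < (x.den : ℤ) := by exact_mod_cast hlt
  exact ⟨by omega, hden ▸ hdQ, hnn, by rw [← hden]; exact_mod_cast hlt'⟩

lemma le_of_mem_G_lt {Q : ℕ} {x z : ℚ} {u v : ℕ} (hxG : x ∈ G Q) (hden : x.den = u)
    (hv1 : 1 ≤ v) (hvQ : v ≤ Q) (huv : Q < u + v) {p' : ℤ}
    (hup' : (u : ℤ) * p' = v * x.num + 1) (hz : z ∈ G Q) (hxz : x < z) :
    (p' : ℚ) / (v : ℚ) ≤ z := by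
  obtain ⟨hu1, huQ, hp0, hpu⟩ := good_mem_facts (Q := Q) (x := x) (u := u) (v := v)
    ⟨hxG, hden, hv1, hvQ, huv, ⟨p', by linarith [hup']⟩⟩
  by_contra hyz
  push_neg at hyz
  obtain ⟨hz0, hz1, hzdQ⟩ := mem_G_iff.mp hz
  set p := x.num with hp
  set zn := z.num with hzn
  set zd := z.den with hzd
  have hzdpos : (0:ℚ) < (zd : ℚ) := by exact_mod_cast z.pos
  have hupos : (0:ℚ) < (u : ℚ) := by exact_mod_cast hu1
  have hvpos : (0:ℚ) < (v : ℚ) := by exact_mod_cast hv1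
  -- from x < z : p * zd < zn * u
  have hA : (p : ℚ) / (u : ℚ) < (zn : ℚ) / (zd : ℚ) := by
    rwa [hp, show ((u:ℚ)) = (x.den : ℚ) by exact_mod_cast hden.symm, Rat.num_div_den,
      hzn, hzd, Rat.num_div_den]
  rw [div_lt_div_iff₀ hupos hzdpos] at hA
  have hA' : (p : ℤ) * zd < zn * u := by exact_mod_cast hA
  -- from z < y : zn * v < p' * zd
  have hB : (zn : ℚ) / (zd : ℚ) < (p' : ℚ) / (v : ℚ) := by
    rwa [hzn, hzd, Rat.num_div_den]
  rw [div_lt_div_iff₀ hzdpos hvpos] at hB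
  have hB' : (zn : ℤ) * v < p' * zd := by exact_mod_cast hB
  -- determinant identity
  have key : (zd : ℤ) = u * (p' * zd - zn * v) + v * (zn * u - p * zd) := by
    linear_combination (-(zd : ℤ)) * hup'
  have h1 : (1 : ℤ) ≤ p' * zd - zn * v := by omega
  have h2 : (1 : ℤ) ≤ zn * u - p * zd := by omega
  have hu' : (1 : ℤ) ≤ (u : ℤ) := by exact_mod_cast hu1
  have hv' : (1 : ℤ) ≤ (v : ℤ) := by exact_mod_cast hv1
  have hge : (u : ℤ) + v ≤ zd := by
    calc (u:ℤ) + v ≤ u * (p' * zd - zn * v) + v * (zn * u - p * zd) := by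
          have := le_mul_of_one_le_right (by linarith : (0:ℤ) ≤ (u:ℤ)) h1
          have := le_mul_of_one_le_right (by linarith : (0:ℤ) ≤ (v:ℤ)) h2
          linarith
      _ = zd := key.symm
  have : (zd : ℤ) ≤ Q := by exact_mod_cast hzdQ
  have : (Q : ℤ) < (u : ℤ) + v := by exact_mod_cast huv
  omega

set_option maxHeartbeats 1000000 in
lemma good_step {Q : ℕ} {x : ℚ} {u v : ℕ} (h : Good Q x u v) :
    Good Q (nxt Q x) v ((Q + u) / v * v - u) := by
  obtain ⟨hu1, huQ, hp0, hpu⟩ := good_mem_facts h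
  obtain ⟨hxG, hden, hv1, hvQ, huv, hdvd⟩ := h
  have hQ1 : 1 ≤ Q := le_trans hv1 hvQ
  obtain ⟨hwl, hwu, hwm, hw1, hwQ, hwv⟩ := w_facts hu1 huQ hv1 hvQ huv
  set m := (Q + u) / v with hm
  set w := m * v - u with hw
  have hwcast : (w : ℤ) = (m : ℤ) * v - u := by
    rw [hw]; push_cast [Nat.cast_sub hwl]; ring
  set p := x.num with hp
  obtain ⟨p', hp'⟩ := hdvd
  have hup' : (u : ℤ) * p' = v * p + 1 := hp'.symm
  rcases eq_or_lt_of_le hv1 with hv1' | hv2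
  · -- v = 1 : wrap-around case
    have hv1'' : v = 1 := hv1'.symm
    subst hv1''
    -- x is the maximum of G Q
    have hfil : ((G Q).filter (x < ·)) = ∅ := by
      rw [Finset.filter_eq_empty_iff]
      intro z hz
      simp only [not_lt]
      -- p = u - 1 and u = Q
      have hu0 : (0:ℤ) < u := by exact_mod_cast hu1
      have h1 : (0:ℤ) < u * p' := by rw [hup']; omega
      have hp'pos : 0 < p' := by nlinarith
      have hp'2 : p' < 2 := by
        by_contra hc
        push_neg at hc
        have h2 : (u:ℤ) * 2 ≤ u * p' := mul_le_mul_of_nonneg_left hc (by positivity)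
        rw [hup'] at h2
        omega
      have hp'1 : p' = 1 := by omega
      rw [hp'1, mul_one] at hup'
      have hpu' : p = (u : ℤ) - 1 := by omega
      have huQ' : u = Q := by omega
      obtain ⟨hz0, hz1, hzdQ⟩ := mem_G_iff.mp hz
      set zn := z.num; set zd := z.den
      have hznn : 0 ≤ zn := Rat.num_nonneg.mpr hz0
      have hzdpos : (0:ℚ) < (zd : ℚ) := by exact_mod_cast z.pos
      have hzlt : zn < (zd : ℤ) := by
        have : (zn : ℚ) < (zd : ℚ) := by
          rw [← Rat.num_div_den z] at hz1
          exact_mod_cast (div_lt_one hzdpos).mp hz1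
        exact_mod_cast this
      have hupos : (0:ℚ) < (u : ℚ) := by exact_mod_cast hu1
      rw [← Rat.num_div_den z, ← Rat.num_div_den x, ← hp,
        show ((x.den : ℚ)) = (u : ℚ) by exact_mod_cast hden, hpu']
      rw [div_le_div_iff₀ hzdpos hupos]
      have hc1 : (zn + 1) * u ≤ zd * u := by
        have : zn + 1 ≤ (zd : ℤ) := by omega
        exact mul_le_mul_of_nonneg_right this (by positivity)
      have hc2 : (zd : ℤ) ≤ u := by
        have : (zd:ℤ) ≤ Q := by exact_mod_cast hzdQ
        omega
      have goal' : zn * (u:ℤ) ≤ ((u:ℤ) - 1) * zd := by nlinarith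
      push_cast
      exact_mod_cast goal'
    have hne : (G Q).Nonempty := ⟨x, hxG⟩
    have hmin : (G Q).min' hne = 0 := by
      refine le_antisymm (Finset.min'_le _ _ (zero_mem_G hQ1)) ?_
      refine Finset.le_min' _ _ _ fun z hz => (mem_G_iff.mp hz).1
    have hnxt : nxt Q x = 0 := by
      rw [nxt, dif_neg (by rw [hfil]; simp), dif_pos hne, hmin]
    rw [hnxt]
    refine ⟨zero_mem_G hQ1, by norm_num, hw1, hwQ, hwv, by norm_num⟩
  · -- v ≥ 2 : generic case
    have hu0 : (0:ℤ) < u := by exact_mod_cast hu1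
    have hv0 : (0:ℤ) < v := by exact_mod_cast hv1
    have hp'0 : 0 < p' := by nlinarith
    have hp'v : p' < v := by
      have h2 : (2:ℤ) ≤ v := by exact_mod_cast hv2
      have : (v:ℤ) * p ≤ v * ((u:ℤ) - 1) := mul_le_mul_of_nonneg_left (by omega) (by linarith)
      have : (u:ℤ) * p' < u * v := by nlinarith
      exact lt_of_mul_lt_mul_left this (by linarith)
    set y : ℚ := (p' : ℚ) / (v : ℚ) with hy
    have hcopy : Nat.Coprime p'.natAbs (v : ℤ).natAbs := by
      rw [Int.natAbs_natCast]
      have : IsCoprime (p' : ℤ) (v : ℤ) := ⟨u, -p, by linarith [hup']⟩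
      rwa [Int.isCoprime_iff_gcd_eq_one, Int.gcd] at this
    have hcastv : (((v:ℤ)):ℚ) = (v:ℚ) := by push_cast; ring
    have hyden : y.den = v := by
      have h := Rat.den_div_eq_of_coprime hv0 hcopy
      rw [hcastv] at h
      rw [hy]
      exact_mod_cast h
    have hynum : y.num = p' := by
      have h := Rat.num_div_eq_of_coprime hv0 hcopy
      rw [hcastv] at h
      rw [hy]
      exact h
    have hyG : y ∈ G Q := by
      rw [mem_G_iff]
      refine ⟨by positivity, ?_, hyden ▸ hvQ⟩
      rw [hy, div_lt_one (by exact_mod_cast hv0)]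
      exact_mod_cast hp'v
    have hxy : x < y := by
      rw [← Rat.num_div_den x, ← hp, show ((x.den : ℚ)) = (u : ℚ) by exact_mod_cast hden, hy]
      rw [div_lt_div_iff₀ (by exact_mod_cast hu0) (by exact_mod_cast hv0)]
      have : (p : ℤ) * v < p' * u := by linarith [hup']
      exact_mod_cast this
    have hfil : y ∈ (G Q).filter (x < ·) := Finset.mem_filter.mpr ⟨hyG, hxy⟩
    have hne : ((G Q).filter (x < ·)).Nonempty := ⟨y, hfil⟩
    have hnxt : nxt Q x = y := by
      rw [nxt, dif_pos hne]
      refine le_antisymm (Finset.min'_le _ _ hfil) ?_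
      refine Finset.le_min' _ _ _ fun z hz => ?_
      obtain ⟨hzG, hxz⟩ := Finset.mem_filter.mp hz
      exact le_of_mem_G_lt hxG hden hv1 hvQ huv hup' hzG hxz
    rw [hnxt]
    refine ⟨hyG, hyden, hw1, hwQ, hwv, ?_⟩
    rw [hynum]
    exact ⟨(m : ℤ) * p' - p, by rw [hwcast]; linarith [hup']⟩


lemma good_unique_x {Q : ℕ} {x y : ℚ} {u v : ℕ} (hx : Good Q x u v) (hy : Good Q y u v) :
    x = y := by
  obtain ⟨hu1, huQ, hx0, hxu⟩ := good_mem_facts hx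
  obtain ⟨-, -, hy0, hyu⟩ := good_mem_facts hy
  obtain ⟨-, hxden, -, -, -, c, hc⟩ := hx
  obtain ⟨-, hyden, -, -, -, d, hd⟩ := hy
  have hcop : IsCoprime ((u:ℤ)) ((v:ℤ)) := ⟨c, -x.num, by linear_combination -hc⟩
  have hdvd : (u:ℤ) ∣ (v:ℤ) * (x.num - y.num) := ⟨c - d, by linear_combination hc - hd⟩
  have hdvd2 : (u:ℤ) ∣ x.num - y.num := hcop.dvd_of_dvd_mul_left hdvd
  have hnum : x.num = y.num := by
    have := Int.eq_zero_of_abs_lt_dvd hdvd2 (by rw [abs_lt]; omega)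
    omega
  exact Rat.ext hnum (hxden.trans hyden.symm)

lemma good_unique_pair {Q : ℕ} {x : ℚ} {u v u' v' : ℕ} (hx : Good Q x u v)
    (hy : Good Q x u' v') : u = u' ∧ v = v' := by
  obtain ⟨hu1, huQ, hx0, hxu⟩ := good_mem_facts hx
  obtain ⟨-, hxden, hv1, hvQ, huv, c, hc⟩ := hx
  obtain ⟨-, hyden, hv1', hvQ', huv', d, hd⟩ := hy
  have huu' : u = u' := hxden ▸ hyden
  subst huu'
  refine ⟨rfl, ?_⟩
  have hcop : IsCoprime ((u:ℤ)) (x.num) := ⟨c, -v, by linear_combination -hc⟩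
  have hdvd : (u:ℤ) ∣ ((v:ℤ) - v') * x.num := ⟨c - d, by linear_combination hc - hd⟩
  have hdvd2 : (u:ℤ) ∣ (v:ℤ) - v' := hcop.dvd_of_dvd_mul_right hdvd
  have := Int.eq_zero_of_abs_lt_dvd hdvd2 (by rw [abs_lt]; push_cast; omega)
  omega

section Rotation

variable {Q : ℕ}
open Fin.NatCast

lemma nxt_orderIso {n' : ℕ} (hcard : (G Q).card = n' + 1) (hQ : 1 ≤ Q)
    (i : Fin (n' + 1)) :
    nxt Q ((G Q).orderIsoOfFin hcard i) = (G Q).orderIsoOfFin hcard (i + 1) := by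
  set e := (G Q).orderIsoOfFin hcard with he
  by_cases hi : (i : ℕ) + 1 < n' + 1
  · have hilt : i < Fin.last n' := by
      rw [Fin.lt_def]
      simpa using hi
    have hval : ((i + 1 : Fin (n' + 1)) : ℕ) = (i : ℕ) + 1 := Fin.val_add_one_of_lt hilt
    have hlt : (e i : ℚ) < (e (i + 1) : ℚ) := by
      have : i < i + 1 := by rw [Fin.lt_def, hval]; omega
      exact_mod_cast e.strictMono this
    have hmem : (e (i + 1) : ℚ) ∈ (G Q).filter ((e i : ℚ) < ·) :=
      Finset.mem_filter.mpr ⟨(e (i + 1)).2, hlt⟩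
    have hne : ((G Q).filter ((e i : ℚ) < ·)).Nonempty := ⟨_, hmem⟩
    rw [nxt, dif_pos hne]
    refine le_antisymm (Finset.min'_le _ _ hmem) ?_
    refine Finset.le_min' _ _ _ fun z hz => ?_
    obtain ⟨hzG, hiz⟩ := Finset.mem_filter.mp hz
    obtain ⟨mz, hmz⟩ : ∃ mz, e mz = ⟨z, hzG⟩ := ⟨e.symm ⟨z, hzG⟩, e.apply_symm_apply _⟩
    have hz' : (e mz : ℚ) = z := by rw [hmz]
    have himz : i < mz := by
      rw [← e.lt_iff_lt]
      exact_mod_cast hz' ▸ hiz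
    have : i + 1 ≤ mz := by
      rw [Fin.le_def, hval]
      rw [Fin.lt_def] at himz
      omega
    calc (e (i + 1) : ℚ) ≤ e mz := by exact_mod_cast e.le_iff_le.mpr this
      _ = z := hz'
  · have hival : (i : ℕ) = n' := by omega
    have hilast : i = Fin.last n' := by ext; simpa using hival
    have hfil : ((G Q).filter ((e i : ℚ) < ·)) = ∅ := by
      rw [Finset.filter_eq_empty_iff]
      intro z hzG
      simp only [not_lt]
      obtain ⟨mz, hmz⟩ : ∃ mz, e mz = ⟨z, hzG⟩ := ⟨e.symm ⟨z, hzG⟩, e.apply_symm_apply _⟩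
      have hz' : (e mz : ℚ) = z := by rw [hmz]
      have : mz ≤ i := hilast ▸ Fin.le_last mz
      calc z = (e mz : ℚ) := hz'.symm
        _ ≤ e i := by exact_mod_cast e.le_iff_le.mpr this
    have hGne : (G Q).Nonempty := ⟨0, zero_mem_G hQ⟩
    rw [nxt, dif_neg (by rw [hfil]; simp), dif_pos hGne]
    have hi0 : i + 1 = 0 := by rw [hilast]; exact Fin.last_add_one n'
    rw [hi0]
    refine le_antisymm (Finset.min'_le _ _ (e 0).2) ?_
    refine Finset.le_min' _ _ _ fun z hz => ?_
    obtain ⟨mz, hmz⟩ : ∃ mz, e mz = ⟨z, hz⟩ := ⟨e.symm ⟨z, hz⟩, e.apply_symm_apply _⟩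
    have hz' : (e mz : ℚ) = z := by rw [hmz]
    calc (e 0 : ℚ) ≤ e mz := by exact_mod_cast e.le_iff_le.mpr (Fin.zero_le mz)
      _ = z := hz'

lemma nxt_iterate {n' : ℕ} (hcard : (G Q).card = n' + 1) (hQ : 1 ≤ Q)
    (j : ℕ) (i : Fin (n' + 1)) :
    (nxt Q)^[j] ((G Q).orderIsoOfFin hcard i) =
      (G Q).orderIsoOfFin hcard (i + (j : Fin (n' + 1))) := by
  induction j with
  | zero => simp
  | succ j ih =>
    rw [Function.iterate_succ_apply', ih, nxt_orderIso hcard hQ]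
    congr 1
    push_cast
    rw [add_assoc]

lemma nxt_iterate_card {Q : ℕ} {x : ℚ} (hQ : 1 ≤ Q) (hx : x ∈ G Q) :
    (nxt Q)^[(G Q).card] x = x := by
  obtain ⟨n', hcard⟩ : ∃ n', (G Q).card = n' + 1 := by
    have : 0 < (G Q).card := Finset.card_pos.mpr ⟨0, zero_mem_G hQ⟩
    exact ⟨(G Q).card - 1, by omega⟩
  set e := (G Q).orderIsoOfFin hcard with he
  obtain ⟨i, hi⟩ : ∃ i, e i = ⟨x, hx⟩ := ⟨e.symm ⟨x, hx⟩, e.apply_symm_apply _⟩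
  have hx' : (e i : ℚ) = x := by rw [hi]
  rw [← hx', nxt_iterate hcard hQ, hcard]
  norm_cast
  rw [Fin.natCast_self, add_zero]

lemma card_dvd_of_iterate_fixed {Q : ℕ} {x : ℚ} {j : ℕ} (hQ : 1 ≤ Q) (hx : x ∈ G Q)
    (hfix : (nxt Q)^[j] x = x) : (G Q).card ∣ j := by
  obtain ⟨n', hcard⟩ : ∃ n', (G Q).card = n' + 1 := by
    have : 0 < (G Q).card := Finset.card_pos.mpr ⟨0, zero_mem_G hQ⟩
    exact ⟨(G Q).card - 1, by omega⟩
  set e := (G Q).orderIsoOfFin hcard with he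
  obtain ⟨i, hi⟩ : ∃ i, e i = ⟨x, hx⟩ := ⟨e.symm ⟨x, hx⟩, e.apply_symm_apply _⟩
  have hx' : (e i : ℚ) = x := by rw [hi]
  rw [← hx', nxt_iterate hcard hQ] at hfix
  have : e (i + (j : Fin (n' + 1))) = e i := by
    apply Subtype.ext
    rw [hfix, hx']
  have hij : i + (j : Fin (n' + 1)) = i := e.injective this
  have : (j : Fin (n' + 1)) = 0 := by
    have := congrArg (fun t => t - i) hij
    simpa [add_sub_cancel_right] using this
  rw [hcard]
  exact Fin.natCast_eq_zero.mp this

end Rotation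

end Part2

namespace Part3
open BCZAux Part2

lemma bcz_step {Q u v l : ℕ} {a : ℝ} (hl : 0 < l) (ha0 : 0 < a)
    (haQ : a * Q ≤ l) (haQ1 : (l : ℝ) < a * (Q + 1))
    (hu1 : 1 ≤ u) (huQ : u ≤ Q) (hv1 : 1 ≤ v) (hvQ : v ≤ Q) (huv : Q < u + v) :
    bcz (a * u / l, a * v / l) = (a * v / l, a * (((Q + u) / v * v - u : ℕ) : ℝ) / l) := by
  obtain ⟨hwl, hwu, hwm, hw1, hwQ, hwv⟩ := w_facts hu1 huQ hv1 hvQ huv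
  set m := (Q + u) / v with hm
  have hlR : (0 : ℝ) < l := by exact_mod_cast hl
  have hvR : (0 : ℝ) < v := by exact_mod_cast hv1
  have huR : (0 : ℝ) ≤ u := by positivity
  have hb : (0 : ℝ) < a * v / l := by positivity
  have hm1R : (m : ℝ) * v ≤ Q + u := by exact_mod_cast hwu
  have hm2R : (Q : ℝ) + u + 1 ≤ m * v + v := by exact_mod_cast hwm
  have hav : a * (v:ℝ) ≠ 0 := by positivity
  have hratio : (1 + a * u / l) / (a * v / l) = (l + a * u) / (a * v) := by
    have hl' : (l : ℝ) ≠ 0 := hlR.ne'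
    field_simp
  have hfl : ⌊(1 + a * u / l) / (a * v / l)⌋ = (m : ℤ) := by
    rw [hratio, Int.floor_eq_iff]
    constructor
    · rw [le_div_iff₀ (by positivity)]
      have : a * ((m : ℝ) * v) ≤ a * ((Q : ℝ) + u) := by
        exact mul_le_mul_of_nonneg_left hm1R ha0.le
      push_cast
      nlinarith
    · rw [div_lt_iff₀ (by positivity)]
      have : a * ((Q : ℝ) + u + 1) ≤ a * ((m : ℝ) * v + v) := by
        exact mul_le_mul_of_nonneg_left hm2R ha0.le
      push_cast
      nlinarith
  have hwcast : ((m * v - u : ℕ) : ℝ) = (m : ℝ) * v - u := by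
    push_cast [Nat.cast_sub hwl]
    ring
  rw [bcz]
  dsimp only
  rw [hfl]
  refine Prod.ext rfl ?_
  dsimp only
  rw [hwcast]
  push_cast
  field_simp
  ring

lemma exists_p0 (k l : ℕ) (hl : 0 < l) (hcop : Nat.Coprime k l) :
    ∃ p : ℤ, 0 ≤ p ∧ p < l ∧ (l : ℤ) ∣ (k : ℤ) * p + 1 := by
  have hlZ : (0 : ℤ) < l := by exact_mod_cast hl
  obtain ⟨s, t, hst⟩ : IsCoprime (k : ℤ) (l : ℤ) := Nat.isCoprime_iff_coprime.mpr hcop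
  set p := (-s) % l with hpdef
  have hp : p = -s - l * ((-s) / l) := Int.emod_def _ _
  refine ⟨p, Int.emod_nonneg _ hlZ.ne', Int.emod_lt_of_pos _ hlZ,
    ⟨t - k * ((-s) / l), ?_⟩⟩
  rw [hp]
  linear_combination -hst

end Part3


section
open BCZAux Part2 Part3

theorem bcz_period_of_rational_slope_segment (k l r : ℕ) (hk : 0 < k) (hkl : k ≤ l)
    (hcop : Nat.Coprime k l) (hr1 : 1 ≤ r) (hrk : r ≤ k) (a : ℝ)
    (ha1 : (l : ℝ) / ((l : ℝ) + r) < a) (ha2 : a ≤ (l : ℝ) / ((l : ℝ) + r - 1)) :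
    (a, a * k / l) ∈ FareyTriangle ∧
    Function.IsPeriodicPt bcz (NFarey (l + r - 1)) (a, a * k / l) ∧
    Function.minimalPeriod bcz (a, a * k / l) = NFarey (l + r - 1) := by
  have hl : 0 < l := lt_of_lt_of_le hk hkl
  set Q : ℕ := l + r - 1 with hQdef
  have hQcast : (Q : ℝ) = (l : ℝ) + r - 1 := by
    rw [hQdef]
    push_cast [Nat.cast_sub (by omega : 1 ≤ l + r)]
    ring
  have hQ1 : 1 ≤ Q := by omega
  have hlQ : l ≤ Q := by omega
  have hkQ : k ≤ Q := by omega
  have hQlk : Q < l + k := by omega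
  have hlR : (0 : ℝ) < l := by exact_mod_cast hl
  have h1l : (1 : ℝ) ≤ (l : ℝ) := by exact_mod_cast hl
  have h1r : (1 : ℝ) ≤ (r : ℝ) := by exact_mod_cast hr1
  have hQR : (0 : ℝ) < (l : ℝ) + r - 1 := by linarith
  have hlrR : (0 : ℝ) < (l : ℝ) + r := by linarith
  have ha0 : 0 < a := lt_trans (by positivity) ha1
  have haQ : a * Q ≤ l := by
    rw [hQcast]
    rw [le_div_iff₀ hQR] at ha2
    linarith
  have haQ1 : (l : ℝ) < a * (Q + 1) := by
    rw [hQcast]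
    rw [div_lt_iff₀ hlrR] at ha1
    nlinarith
  have ha1' : a ≤ 1 := le_trans ha2 (by rw [div_le_one hQR]; linarith)
  have hkR : (0 : ℝ) < k := by exact_mod_cast hk
  have hklR : (k : ℝ) ≤ l := by exact_mod_cast hkl
  have hFT : (a, a * k / l) ∈ FareyTriangle := by
    refine ⟨ha0, ha1', by positivity, ?_, ?_⟩
    · rw [div_le_one hlR]
      nlinarith
    · dsimp only
      have hQ1k : (Q : ℝ) + 1 ≤ l + k := by exact_mod_cast hQlk
      have : a * ((Q : ℝ) + 1) ≤ a * ((l : ℝ) + k) :=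
        mul_le_mul_of_nonneg_left hQ1k ha0.le
      rw [show a + a * k / l = a * ((l : ℝ) + k) / l by field_simp]
      rw [lt_div_iff₀ hlR]
      nlinarith
  -- construct the base Farey fraction x₀ = p / l
  obtain ⟨p, hp0, hpl, hpd⟩ := exists_p0 k l hl hcop
  have hlZ : (0 : ℤ) < l := by exact_mod_cast hl
  have hplcop : Nat.Coprime p.natAbs ((l : ℤ)).natAbs := by
    obtain ⟨c, hc⟩ := hpd
    have : IsCoprime p ((l : ℤ)) := ⟨-k, c, by linear_combination -hc⟩
    rwa [Int.isCoprime_iff_gcd_eq_one, Int.gcd] at this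
  set x₀ : ℚ := (p : ℚ) / (l : ℚ) with hx₀
  have hcastl : (((l : ℤ)) : ℚ) = (l : ℚ) := by push_cast; ring
  have hx₀den : x₀.den = l := by
    have h := Rat.den_div_eq_of_coprime hlZ hplcop
    rw [hcastl] at h
    rw [hx₀]
    exact_mod_cast h
  have hx₀num : x₀.num = p := by
    have h := Rat.num_div_eq_of_coprime hlZ hplcop
    rw [hcastl] at h
    rw [hx₀]
    exact h
  have hx₀G : x₀ ∈ G Q := by
    rw [mem_G_iff]
    refine ⟨by positivity, ?_, hx₀den ▸ hlQ⟩
    rw [hx₀, div_lt_one (by exact_mod_cast hlZ)]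
    exact_mod_cast hpl
  have hgood₀ : Good Q x₀ l k := ⟨hx₀G, hx₀den, hk, hkQ, hQlk, by rw [hx₀num]; exact hpd⟩
  -- the parallel orbits
  have main : ∀ j : ℕ, ∃ u v : ℕ, Good Q ((nxt Q)^[j] x₀) u v ∧
      bcz^[j] (a, a * k / l) = (a * u / l, a * v / l) := by
    intro j
    induction j with
    | zero =>
      refine ⟨l, k, by simpa using hgood₀, ?_⟩
      have hal : a * (l : ℝ) / l = a := by field_simp
      simp only [Function.iterate_zero, id_eq, hal]
    | succ j ih =>
      obtain ⟨u, v, hgood, hbcz⟩ := ih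
      obtain ⟨hu1, huQ, -, -⟩ := good_mem_facts hgood
      have hv1 := hgood.2.2.1
      have hvQ := hgood.2.2.2.1
      have huv := hgood.2.2.2.2.1
      refine ⟨v, (Q + u) / v * v - u, ?_, ?_⟩
      · rw [Function.iterate_succ_apply']
        exact good_step hgood
      · rw [Function.iterate_succ_apply', hbcz]
        exact bcz_step hl ha0 haQ haQ1 hu1 huQ hv1 hvQ huv
  have hcard : (G Q).card = NFarey Q := card_G Q
  have hext : ∀ u v : ℕ, (a * u / l, a * v / l) = (a, a * k / l) → u = l ∧ v = k := by
    intro u v h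
    have h1 : a * u / l = a := congrArg Prod.fst h
    have h2 : a * v / l = a * k / l := congrArg Prod.snd h
    constructor
    · field_simp at h1
      exact_mod_cast h1
    · field_simp at h2
      exact_mod_cast h2
  have hNpos : 0 < NFarey Q := by
    rw [← hcard]
    exact Finset.card_pos.mpr ⟨0, zero_mem_G hQ1⟩
  have hal : a * (l : ℝ) / l = a := by field_simp
  have hper : Function.IsPeriodicPt bcz (NFarey Q) (a, a * k / l) := by
    obtain ⟨u, v, hgood, hbcz⟩ := main (NFarey Q)
    have hiter : (nxt Q)^[NFarey Q] x₀ = x₀ := by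
      rw [← hcard]
      exact nxt_iterate_card hQ1 hx₀G
    rw [hiter] at hgood
    obtain ⟨hu, hv⟩ := good_unique_pair hgood hgood₀
    rw [hu, hv] at hbcz
    show bcz^[NFarey Q] (a, a * k / l) = (a, a * k / l)
    rw [hbcz, hal]
  refine ⟨hFT, hper, ?_⟩
  have hmdvd : Function.minimalPeriod bcz (a, a * k / l) ∣ NFarey Q :=
    hper.minimalPeriod_dvd
  have hmpos : 0 < Function.minimalPeriod bcz (a, a * k / l) :=
    hper.minimalPeriod_pos hNpos
  have hfix : bcz^[Function.minimalPeriod bcz (a, a * k / l)] (a, a * k / l) = (a, a * k / l) :=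
    Function.iterate_minimalPeriod
  obtain ⟨u, v, hgood, hbcz⟩ := main (Function.minimalPeriod bcz (a, a * k / l))
  rw [hfix] at hbcz
  obtain ⟨hu, hv⟩ := hext u v hbcz.symm
  rw [hu, hv] at hgood
  have hiterfix : (nxt Q)^[Function.minimalPeriod bcz (a, a * k / l)] x₀ = x₀ :=
    good_unique_x hgood hgood₀
  have hNdvd : NFarey Q ∣ Function.minimalPeriod bcz (a, a * k / l) := by
    rw [← hcard]
    exact card_dvd_of_iterate_fixed hQ1 hx₀G hiterfix
  exact Nat.dvd_antisymm hmdvd hNdvd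

end
end
end

section
/- Let k ≤ l be coprime positive integers and let a be a real number with l/(l+k) < a ≤ 1. Then the point (a, a·k/l) ∈ Ω is T-periodic, and the matrix accumulated along its periodic orbit satisfies A_{P(a, a·k/l)}(a, a·k/l) = [[1−kl, l²],[−k², 1+kl]]. In particular this matrix has trace 2 (it is parabolic) and is independent of a in the stated range. -/
noncomputable section

/-- The matrix `A(a,b) = [[0,1],[-1,κ(a,b)]] ∈ SL(2,ℤ)`, with `κ(a,b) = ⌊(1+a)/b⌋`. -/
def Amat (p : ℝ × ℝ) : Matrix (Fin 2) (Fin 2) ℤ :=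
  !![0, 1; -1, ⌊(1 + p.1) / p.2⌋]

/-- The cocycle `A_n(a,b) = A(T^{n-1}(a,b)) ⋯ A(T(a,b)) A(a,b)`. -/
def AProd : ℕ → ℝ × ℝ → Matrix (Fin 2) (Fin 2) ℤ
  | 0, _ => 1
  | n + 1, p => Amat (bcz^[n] p) * AProd n p

/-- Auxiliary integer model of the BCZ dynamics along the line of slope `k/l`. -/
def fstep (t : ℝ) (q : (ℤ × ℤ) × (ℤ × ℤ)) : (ℤ × ℤ) × (ℤ × ℤ) :=
  ((q.1.2, ⌊(t + (q.1.1 : ℝ)) / (q.1.2 : ℝ)⌋ * q.1.2 - q.1.1),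
   (q.2.2, ⌊(t + (q.1.1 : ℝ)) / (q.1.2 : ℝ)⌋ * q.2.2 - q.2.1))

lemma fstep_invariant (k l : ℕ) (a t : ℝ) (ha : 0 < a) (ht : t = (l : ℝ) / a)
    (v1 v2 : ℤ) (hbez : (l : ℤ) * v2 - (k : ℤ) * v1 = 1)
    (hl0 : (0 : ℤ) < (l : ℤ)) (hk0 : (0 : ℤ) < (k : ℤ))
    (hlt : (l : ℝ) ≤ t) (hkt : (k : ℝ) ≤ t) (htlk : t < (l : ℝ) + (k : ℝ)) :
    ∀ j : ℕ, letI s := (fstep t)^[j] (((l : ℤ), (k : ℤ)), (v1, v2))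
    (0 < s.1.1 ∧ 0 < s.1.2 ∧ (s.1.1 : ℝ) ≤ t ∧ (s.1.2 : ℝ) ≤ t ∧
      t < (s.1.1 : ℝ) + (s.1.2 : ℝ)) ∧
    s.2.2 * s.1.1 - s.2.1 * s.1.2 = 1 ∧
    bcz^[j] (a, a * k / l) = ((a / l) * s.1.1, (a / l) * s.1.2) ∧
    AProd j (a, a * k / l) * !![(l : ℤ), v1; (k : ℤ), v2] =
      !![s.1.1, s.2.1; s.1.2, s.2.2] := by
  have hla : (0 : ℝ) < (l : ℝ) := by exact_mod_cast hl0
  have hlne : (l : ℝ) ≠ 0 := ne_of_gt hla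
  have hane : a ≠ 0 := ne_of_gt ha
  intro j
  induction j with
  | zero =>
    refine ⟨⟨hl0, hk0, hlt, hkt, htlk⟩,
      by simp only [Function.iterate_zero, id_eq]; linarith [hbez], ?_, ?_⟩
    · simp only [Function.iterate_zero, id_eq, Prod.mk.injEq]
      constructor
      · push_cast; field_simp
      · push_cast; field_simp
    · simp only [Function.iterate_zero, id_eq]
      show (1 : Matrix (Fin 2) (Fin 2) ℤ) * _ = _
      rw [one_mul]
  | succ j ih =>
    obtain ⟨⟨hu1, hu2, hut1, hut2, htu⟩, hbr, hC, hD⟩ := ih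
    set s := (fstep t)^[j] (((l : ℤ), (k : ℤ)), (v1, v2)) with hs
    have hstep : (fstep t)^[j+1] (((l : ℤ), (k : ℤ)), (v1, v2)) = fstep t s := by
      rw [Function.iterate_succ_apply']
    set u : ℤ := s.1.1
    set u' : ℤ := s.1.2
    set c : ℤ := s.2.1
    set c' : ℤ := s.2.2
    have hu'r : (0 : ℝ) < (u' : ℝ) := by exact_mod_cast hu2
    have hu'ne : (u' : ℝ) ≠ 0 := ne_of_gt hu'r
    set K : ℤ := ⌊(t + (u : ℝ)) / (u' : ℝ)⌋ with hK
    have hfs : fstep t s = ((u', K * u' - u), (c', K * c' - c)) := rfl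
    -- floor bounds
    have hKle : (K : ℝ) * u' ≤ t + u := by
      have := Int.floor_le ((t + (u : ℝ)) / (u' : ℝ))
      calc (K : ℝ) * u' ≤ ((t + (u : ℝ)) / (u' : ℝ)) * u' := by
            apply mul_le_mul_of_nonneg_right this (le_of_lt hu'r)
        _ = t + u := by field_simp
    have hKgt : t + u < ((K : ℝ) + 1) * u' := by
      have := Int.lt_floor_add_one ((t + (u : ℝ)) / (u' : ℝ))
      calc t + (u : ℝ) = ((t + (u : ℝ)) / (u' : ℝ)) * u' := by field_simp
        _ < ((K : ℝ) + 1) * u' := by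
            apply mul_lt_mul_of_pos_right this hu'r
    -- new value bounds
    have hv_le : ((K * u' - u : ℤ) : ℝ) ≤ t := by push_cast; linarith
    have hv_gt : t - (u' : ℝ) < ((K * u' - u : ℤ) : ℝ) := by push_cast; nlinarith
    have hv_pos : 0 < K * u' - u := by
      have : (0 : ℝ) < ((K * u' - u : ℤ) : ℝ) := by
        have : t - (u' : ℝ) ≥ 0 := by linarith
        linarith
      exact_mod_cast this
    -- the floor at the real point equals K
    have hfloor : ⌊(1 + (a / l) * (u : ℝ)) / ((a / l) * (u' : ℝ))⌋ = K := by
      rw [hK, ht]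
      congr 1
      field_simp
    refine ⟨?_, ?_, ?_, ?_⟩
    · rw [hstep, hfs]
      exact ⟨hu2, hv_pos, hut2, hv_le, by push_cast; push_cast at hv_gt; linarith⟩
    · rw [hstep, hfs]
      simp only
      nlinarith [hbr]
    · rw [hstep, hfs, Function.iterate_succ_apply', hC]
      simp only [bcz, Prod.mk.injEq]
      refine ⟨trivial, ?_⟩
      rw [hfloor]
      push_cast
      ring
    · have hAP : AProd (j+1) (a, a * k / l) =
          Amat (bcz^[j] (a, a * k / l)) * AProd j (a, a * k / l) := rfl
      rw [hstep, hfs, hAP, Matrix.mul_assoc, hD, hC]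
      simp only [Amat]
      rw [hfloor]
      rw [Matrix.mul_fin_two]
      congr 1 <;> ring

set_option maxHeartbeats 2000000 in
theorem bcz_periodic_orbit_matrix_parabolic (k l : ℕ) (hk : 0 < k) (hkl : k ≤ l)
    (hcop : Nat.Coprime k l) (a : ℝ) (ha1 : (l : ℝ) / ((l : ℝ) + k) < a) (ha2 : a ≤ 1) :
    (a, a * k / l) ∈ FareyTriangle ∧
    (∃ n : ℕ, 0 < n ∧ bcz^[n] (a, a * k / l) = (a, a * k / l)) ∧
    AProd (Function.minimalPeriod bcz (a, a * k / l)) (a, a * k / l)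
      = !![1 - (k : ℤ) * l, (l : ℤ) ^ 2; -(k : ℤ) ^ 2, 1 + (k : ℤ) * l] ∧
    Matrix.trace (AProd (Function.minimalPeriod bcz (a, a * k / l)) (a, a * k / l))
      = 2 := by
  have hl : 0 < l := lt_of_lt_of_le hk hkl
  have hk0 : (0 : ℤ) < (k : ℤ) := by exact_mod_cast hk
  have hl0 : (0 : ℤ) < (l : ℤ) := by exact_mod_cast hl
  have hka : (0 : ℝ) < (k : ℝ) := by exact_mod_cast hk
  have hla : (0 : ℝ) < (l : ℝ) := by exact_mod_cast hl
  have hkla : (k : ℝ) ≤ (l : ℝ) := by exact_mod_cast hkl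
  have hlkpos : (0 : ℝ) < (l : ℝ) + (k : ℝ) := by linarith
  have ha0 : 0 < a := lt_trans (by positivity) ha1
  have hane : a ≠ 0 := ne_of_gt ha0
  have hlne : (l : ℝ) ≠ 0 := ne_of_gt hla
  have halk : (l : ℝ) < a * ((l : ℝ) + (k : ℝ)) := by
    rw [div_lt_iff₀ hlkpos] at ha1; linarith
  set t : ℝ := (l : ℝ) / a with ht
  have hlt : (l : ℝ) ≤ t := by
    rw [ht, le_div_iff₀ ha0]; nlinarith
  have hkt : (k : ℝ) ≤ t := le_trans hkla hlt
  have htlk : t < (l : ℝ) + (k : ℝ) := by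
    rw [ht, div_lt_iff₀ ha0]; nlinarith
  -- Bezout
  obtain ⟨v1, v2, hbez⟩ : ∃ v1 v2 : ℤ, (l : ℤ) * v2 - (k : ℤ) * v1 = 1 := by
    refine ⟨-(Nat.gcdA k l), Nat.gcdB k l, ?_⟩
    have h := Nat.gcd_eq_gcd_ab k l
    rw [hcop.gcd_eq_one] at h
    push_cast at h ⊢
    linarith
  have inv := fstep_invariant k l a t ha0 ht v1 v2 hbez hl0 hk0 hlt hkt htlk
  set q : ℕ → (ℤ × ℤ) × (ℤ × ℤ) :=
    fun j => (fstep t)^[j] (((l : ℤ), (k : ℤ)), (v1, v2)) with hq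
  have hq0 : q 0 = (((l : ℤ), (k : ℤ)), (v1, v2)) := rfl
  have hqs : ∀ j, q (j + 1) = fstep t (q j) := fun j =>
    Function.iterate_succ_apply' (fstep t) j _
  have hpos1 : ∀ j, 0 < (q j).1.1 := fun j => (inv j).1.1
  have hpos2 : ∀ j, 0 < (q j).1.2 := fun j => (inv j).1.2.1
  have hle1 : ∀ j, ((q j).1.1 : ℝ) ≤ t := fun j => (inv j).1.2.2.1
  have hle2 : ∀ j, ((q j).1.2 : ℝ) ≤ t := fun j => (inv j).1.2.2.2.1
  have hsum : ∀ j, t < ((q j).1.1 : ℝ) + ((q j).1.2 : ℝ) := fun j => (inv j).1.2.2.2.2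
  have hbr : ∀ j, (q j).2.2 * (q j).1.1 - (q j).2.1 * (q j).1.2 = 1 := fun j => (inv j).2.1
  have hC : ∀ j, bcz^[j] (a, a * k / l) = ((a / l) * (q j).1.1, (a / l) * (q j).1.2) :=
    fun j => (inv j).2.2.1
  have hD : ∀ j, AProd j (a, a * k / l) * !![(l : ℤ), v1; (k : ℤ), v2] =
      !![(q j).1.1, (q j).2.1; (q j).1.2, (q j).2.2] := fun j => (inv j).2.2.2
  have hshift1 : ∀ j, (q (j + 1)).1.1 = (q j).1.2 := fun j => by rw [hqs]; rfl
  have hshift2 : ∀ j, (q (j + 1)).2.1 = (q j).2.2 := fun j => by rw [hqs]; rfl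
  -- the angle sequence
  set θ : ℕ → ℝ := fun j => ((q j).2.1 : ℝ) / ((q j).1.1 : ℝ) with hθ
  have hθ0 : θ 0 = (v1 : ℝ) / (l : ℝ) := rfl
  have hθstep : ∀ j, θ (j + 1) = θ j + 1 / (((q j).1.1 : ℝ) * ((q j).1.2 : ℝ)) := by
    intro j
    have h1 : (0 : ℝ) < ((q j).1.1 : ℝ) := by exact_mod_cast hpos1 j
    have h2 : (0 : ℝ) < ((q j).1.2 : ℝ) := by exact_mod_cast hpos2 j
    have hbrr : ((q j).2.2 : ℝ) * ((q j).1.1 : ℝ) - ((q j).2.1 : ℝ) * ((q j).1.2 : ℝ) = 1 := by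
      exact_mod_cast hbr j
    have key : ((q j).2.2 : ℝ) / ((q j).1.2 : ℝ) - ((q j).2.1 : ℝ) / ((q j).1.1 : ℝ) =
        1 / (((q j).1.1 : ℝ) * ((q j).1.2 : ℝ)) := by
      rw [div_sub_div _ _ (ne_of_gt h2) (ne_of_gt h1)]
      rw [mul_comm (((q j).1.2 : ℝ)) (((q j).1.1 : ℝ))]
      congr 1
      linarith [hbrr]
    simp only [hθ, hshift1 j, hshift2 j]
    linarith [key]
  have hθmono : StrictMono θ := by
    apply strictMono_nat_of_lt_succ
    intro j
    rw [hθstep j]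
    have h1 : (0 : ℝ) < ((q j).1.1 : ℝ) := by exact_mod_cast hpos1 j
    have h2 : (0 : ℝ) < ((q j).1.2 : ℝ) := by exact_mod_cast hpos2 j
    have : 0 < 1 / (((q j).1.1 : ℝ) * ((q j).1.2 : ℝ)) := by positivity
    linarith
  -- growth and existence of a crossing
  have hgrow : ∀ j, θ 0 + j * (1 / (((l : ℝ) + k) * ((l : ℝ) + k))) ≤ θ j := by
    intro j
    induction j with
    | zero => simp
    | succ j ih =>
      have h1 : (0 : ℝ) < ((q j).1.1 : ℝ) := by exact_mod_cast hpos1 j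
      have h2 : (0 : ℝ) < ((q j).1.2 : ℝ) := by exact_mod_cast hpos2 j
      have hb1 : ((q j).1.1 : ℝ) ≤ (l : ℝ) + k := le_trans (hle1 j) (le_of_lt htlk)
      have hb2 : ((q j).1.2 : ℝ) ≤ (l : ℝ) + k := le_trans (hle2 j) (le_of_lt htlk)
      have hprod : ((q j).1.1 : ℝ) * ((q j).1.2 : ℝ) ≤ ((l : ℝ) + k) * ((l : ℝ) + k) := by
        apply mul_le_mul hb1 hb2 (le_of_lt h2) (le_of_lt hlkpos)
      have hstep' : 1 / (((l : ℝ) + k) * ((l : ℝ) + k)) ≤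
          1 / (((q j).1.1 : ℝ) * ((q j).1.2 : ℝ)) := by
        apply one_div_le_one_div_of_le (by positivity) hprod
      rw [hθstep j]
      push_cast
      linarith
  have hex : ∃ j, θ 0 + 1 ≤ θ j := by
    obtain ⟨N, hN⟩ := exists_nat_ge (((l : ℝ) + k) * ((l : ℝ) + k))
    refine ⟨N, ?_⟩
    have := hgrow N
    have hNpos : (0 : ℝ) < ((l : ℝ) + k) * ((l : ℝ) + k) := by positivity
    have : θ 0 + 1 ≤ θ 0 + N * (1 / (((l : ℝ) + k) * ((l : ℝ) + k))) := by
      have : (1 : ℝ) ≤ N * (1 / (((l : ℝ) + k) * ((l : ℝ) + k))) := by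
        rw [mul_one_div, le_div_iff₀ hNpos]; linarith
      linarith
    linarith [hgrow N]
  set m : ℕ := Nat.find hex with hm
  have hmspec : θ 0 + 1 ≤ θ m := Nat.find_spec hex
  have hmpos : 0 < m := by
    rcases Nat.eq_zero_or_pos m with h | h
    · exfalso; rw [h] at hmspec; linarith
    · exact h
  obtain ⟨j, hj⟩ : ∃ j, m = j + 1 := ⟨m - 1, (Nat.succ_pred_eq_of_pos hmpos).symm⟩
  have hjlt : ¬ (θ 0 + 1 ≤ θ j) := Nat.find_min hex (by omega)
  -- consequences of being at index j, m = j+1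
  have humj : (q m).1.1 = (q j).1.2 := by rw [hj, hshift1]
  have hcmj : (q m).2.1 = (q j).2.2 := by rw [hj, hshift2]
  have hcopint : IsCoprime ((l : ℤ)) (v1 + (l : ℤ)) :=
    ⟨v2 + k, -(k : ℤ), by linear_combination hbez⟩
  have hθ01 : θ 0 + 1 = ((v1 + (l : ℤ) : ℤ) : ℝ) / (l : ℝ) := by
    rw [hθ0]; push_cast; field_simp
  have h1j : (0 : ℝ) < ((q j).1.1 : ℝ) := by exact_mod_cast hpos1 j
  have h1m : (0 : ℝ) < ((q m).1.1 : ℝ) := by exact_mod_cast hpos1 m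
  -- Step A : the crossing is exact
  have hθm : θ m = θ 0 + 1 := by
    by_contra hne
    have hgt : θ 0 + 1 < θ m := lt_of_le_of_ne hmspec (Ne.symm hne)
    have hA : (q j).2.1 * (l : ℤ) + 1 ≤ (v1 + (l : ℤ)) * (q j).1.1 := by
      have h' : ((q j).2.1 : ℝ) / ((q j).1.1 : ℝ) < ((v1 + (l : ℤ) : ℤ) : ℝ) / (l : ℝ) := by
        rw [← hθ01]; exact lt_of_not_ge hjlt
      rw [div_lt_div_iff₀ h1j hla] at h'
      have h'' : (q j).2.1 * (l : ℤ) < (v1 + (l : ℤ)) * (q j).1.1 := by exact_mod_cast h'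
      omega
    have hB : (v1 + (l : ℤ)) * (q m).1.1 + 1 ≤ (q m).2.1 * (l : ℤ) := by
      have h' : ((v1 + (l : ℤ) : ℤ) : ℝ) / (l : ℝ) < ((q m).2.1 : ℝ) / ((q m).1.1 : ℝ) := by
        rw [← hθ01]; exact hgt
      rw [div_lt_div_iff₀ hla h1m] at h'
      have h'' : (v1 + (l : ℤ)) * (q m).1.1 < (q m).2.1 * (l : ℤ) := by exact_mod_cast h'
      omega
    have hbrj : (q m).2.1 * (q j).1.1 - (q j).2.1 * (q m).1.1 = 1 := by
      rw [humj, hcmj]; exact hbr j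
    have hsum' : (l : ℤ) + 1 ≤ (q j).1.1 + (q m).1.1 := by
      have hreal : (l : ℝ) < ((q j).1.1 : ℝ) + ((q m).1.1 : ℝ) := by
        have h := hsum j
        rw [humj]; push_cast; push_cast at h; linarith
      have : (l : ℤ) < (q j).1.1 + (q m).1.1 := by exact_mod_cast hreal
      omega
    have e1 : ((v1 + (l : ℤ)) * (q m).1.1 + 1) * (q j).1.1 ≤ ((q m).2.1 * (l : ℤ)) * (q j).1.1 :=
      mul_le_mul_of_nonneg_right hB (le_of_lt (hpos1 j))
    have e2 : ((q j).2.1 * (l : ℤ)) * (q m).1.1 ≤ ((v1 + (l : ℤ)) * (q j).1.1 - 1) * (q m).1.1 :=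
      mul_le_mul_of_nonneg_right (by omega) (le_of_lt (hpos1 m))
    have e3 : ((q m).2.1 * (q j).1.1) * (l : ℤ) - ((q j).2.1 * (q m).1.1) * (l : ℤ) = l := by
      linear_combination (l : ℤ) * hbrj
    nlinarith [e1, e2, e3, hsum']
  -- exact fraction identity, hence the state at time m
  have hcml : (q m).2.1 * (l : ℤ) = (v1 + (l : ℤ)) * (q m).1.1 := by
    have h' : ((q m).2.1 : ℝ) / ((q m).1.1 : ℝ) = ((v1 + (l : ℤ) : ℤ) : ℝ) / (l : ℝ) := by
      rw [← hθ01]; exact hθm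
    rw [div_eq_div_iff (ne_of_gt h1m) hlne] at h'
    exact_mod_cast h'
  have hcop3 : IsCoprime ((q m).1.1) ((q m).2.1) :=
    ⟨(q m).2.2, -(q m).1.2, by linear_combination hbr m⟩
  have hdl : (l : ℤ) ∣ (q m).1.1 :=
    hcopint.dvd_of_dvd_mul_left ⟨(q m).2.1, by linarith [hcml]⟩
  have hdu : (q m).1.1 ∣ (l : ℤ) :=
    hcop3.dvd_of_dvd_mul_left ⟨v1 + (l : ℤ), by linarith [hcml]⟩
  have huml : (q m).1.1 = (l : ℤ) :=
    Int.dvd_antisymm (le_of_lt (hpos1 m)) (le_of_lt hl0) hdu hdl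
  have hcmr : (q m).2.1 = v1 + (l : ℤ) := by
    have h' := hcml; rw [huml] at h'
    exact mul_right_cancel₀ (ne_of_gt hl0) h'
  -- Step B : second component at time m
  have hbrm : (q m).2.2 * (l : ℤ) - (v1 + (l : ℤ)) * (q m).1.2 = 1 := by
    have h' := hbr m; rw [huml, hcmr] at h'; linarith
  have hkey : (l : ℤ) * ((q m).2.2 - (v2 + k)) = (v1 + (l : ℤ)) * ((q m).1.2 - k) := by
    linear_combination hbrm - hbez
  have hdvd2 : (l : ℤ) ∣ ((q m).1.2 - k) :=
    hcopint.dvd_of_dvd_mul_left ⟨(q m).2.2 - (v2 + k), by linarith [hkey]⟩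
  have habs : |(q m).1.2 - (k : ℤ)| < (l : ℤ) := by
    have hb1 : ((q m).1.2 : ℝ) ≤ t := hle2 m
    have hb2 : t - (l : ℝ) < ((q m).1.2 : ℝ) := by
      have h := hsum m
      have : ((q m).1.1 : ℝ) = (l : ℝ) := by exact_mod_cast huml
      rw [this] at h; linarith
    have hreal1 : ((q m).1.2 : ℝ) - (k : ℝ) < (l : ℝ) := by linarith
    have hreal2 : -(l : ℝ) < ((q m).1.2 : ℝ) - (k : ℝ) := by linarith
    rw [abs_lt]
    constructor
    · exact_mod_cast hreal2
    · exact_mod_cast hreal1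
  have hu'm : (q m).1.2 = (k : ℤ) := by
    have h0 := Int.eq_zero_of_abs_lt_dvd hdvd2 habs; omega
  have hc'm : (q m).2.2 = v2 + (k : ℤ) := by
    have h0 : (l : ℤ) * ((q m).2.2 - (v2 + k)) = 0 := by rw [hkey, hu'm]; ring
    rcases mul_eq_zero.mp h0 with h | h
    · omega
    · omega
  -- periodicity
  have hret : bcz^[m] (a, a * k / l) = (a, a * k / l) := by
    rw [hC m, huml, hu'm]
    simp only [Prod.mk.injEq]
    constructor
    · push_cast; field_simp
    · push_cast; field_simp
  have hper : Function.IsPeriodicPt bcz m (a, a * k / l) := hret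
  have hminle : Function.minimalPeriod bcz (a, a * k / l) ≤ m := hper.minimalPeriod_le hmpos
  set n₀ : ℕ := Function.minimalPeriod bcz (a, a * k / l) with hn₀
  have hn₀per : bcz^[n₀] (a, a * k / l) = (a, a * k / l) :=
    Function.isPeriodicPt_minimalPeriod bcz _
  have hn₀pos : 0 < n₀ := hper.minimalPeriod_pos hmpos
  -- at time n₀ the state is back on the line, with numerator shifted by at least l
  have hcomp := hC n₀
  rw [hn₀per] at hcomp
  have h1n : a = (a / l) * ((q n₀).1.1 : ℝ) := congrArg Prod.fst hcomp
  have h2n : a * k / l = (a / l) * ((q n₀).1.2 : ℝ) := congrArg Prod.snd hcomp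
  have hun : (q n₀).1.1 = (l : ℤ) := by
    have hr : ((q n₀).1.1 : ℝ) = (l : ℝ) := by
      rw [div_mul_eq_mul_div, eq_div_iff hlne] at h1n
      exact (mul_left_cancel₀ hane h1n).symm
    exact_mod_cast hr
  have hu'n : (q n₀).1.2 = (k : ℤ) := by
    have hr : ((q n₀).1.2 : ℝ) = (k : ℝ) := by
      rw [div_mul_eq_mul_div, div_left_inj' hlne] at h2n
      exact (mul_left_cancel₀ hane h2n).symm
    exact_mod_cast hr
  have hbrn : (q n₀).2.2 * (l : ℤ) - (q n₀).2.1 * (k : ℤ) = 1 := by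
    have h' := hbr n₀; rw [hun, hu'n] at h'; linarith
  have hdvd3 : (l : ℤ) ∣ ((q n₀).2.1 - v1) := by
    have hck : (k : ℤ) * ((q n₀).2.1 - v1) = (l : ℤ) * ((q n₀).2.2 - v2) := by
      linear_combination hbez - hbrn
    have hcoplk : IsCoprime ((l : ℤ)) ((k : ℤ)) := ⟨v2, -v1, by linear_combination hbez⟩
    exact hcoplk.dvd_of_dvd_mul_left ⟨(q n₀).2.2 - v2, hck⟩
  have hθn : θ 0 + 1 ≤ θ n₀ := by
    have hlt0 : θ 0 < θ n₀ := hθmono hn₀pos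
    have hθnval : θ n₀ = ((q n₀).2.1 : ℝ) / (l : ℝ) := by
      simp only [hθ]
      rw [show ((q n₀).1.1 : ℝ) = (l : ℝ) by exact_mod_cast hun]
    have hv : v1 < (q n₀).2.1 := by
      have h' : (v1 : ℝ) / (l : ℝ) < ((q n₀).2.1 : ℝ) / (l : ℝ) := by
        rw [← hθ0, ← hθnval]; exact hlt0
      rw [div_lt_div_iff₀ hla hla] at h'
      have : (v1 : ℝ) < ((q n₀).2.1 : ℝ) := by nlinarith
      exact_mod_cast this
    obtain ⟨e, he⟩ := hdvd3
    have he1 : 1 ≤ e := by nlinarith [hl0]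
    have hcn : v1 + (l : ℤ) ≤ (q n₀).2.1 := by nlinarith [hl0]
    rw [hθ01, hθnval, div_le_div_iff₀ hla hla]
    have hcnr : ((v1 + (l : ℤ) : ℤ) : ℝ) ≤ ((q n₀).2.1 : ℝ) := by exact_mod_cast hcn
    nlinarith
  have hmeq : n₀ = m := le_antisymm hminle (Nat.find_min' hex hθn)
  -- final matrix computation
  have hDm := hD m
  rw [huml, hcmr, hu'm, hc'm] at hDm
  have hVW : !![(l : ℤ), v1; (k : ℤ), v2] * !![v2, -v1; -(k : ℤ), (l : ℤ)] = 1 := by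
    rw [Matrix.mul_fin_two, Matrix.one_fin_two]
    ext i j
    fin_cases i <;> fin_cases j <;> simp <;> first | linear_combination hbez | ring1
  have hMP : AProd m (a, a * k / l)
      = !![1 - (k : ℤ) * l, (l : ℤ) ^ 2; -(k : ℤ) ^ 2, 1 + (k : ℤ) * l] := by
    calc AProd m (a, a * k / l)
        = AProd m (a, a * k / l) *
            (!![(l : ℤ), v1; (k : ℤ), v2] * !![v2, -v1; -(k : ℤ), (l : ℤ)]) := by
          rw [hVW, mul_one]
      _ = (AProd m (a, a * k / l) * !![(l : ℤ), v1; (k : ℤ), v2]) *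
            !![v2, -v1; -(k : ℤ), (l : ℤ)] := by rw [Matrix.mul_assoc]
      _ = !![(l : ℤ), v1 + l; (k : ℤ), v2 + k] * !![v2, -v1; -(k : ℤ), (l : ℤ)] := by
          rw [hDm]
      _ = !![1 - (k : ℤ) * l, (l : ℤ) ^ 2; -(k : ℤ) ^ 2, 1 + (k : ℤ) * l] := by
          rw [Matrix.mul_fin_two]
          ext i j
          fin_cases i <;> fin_cases j <;> simp <;> first | linear_combination hbez | ring1
  refine ⟨?_, ⟨m, hmpos, hret⟩, ?_, ?_⟩
  · refine ⟨ha0, ha2, by positivity, ?_, ?_⟩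
    · show a * k / l ≤ 1
      rw [div_le_one hla]
      nlinarith
    · show 1 < a + a * k / l
      have hiden : a + a * k / l = a * ((l : ℝ) + k) / l := by field_simp
      rw [hiden, lt_div_iff₀ hla]
      nlinarith
  · rw [hmeq]; exact hMP
  · rw [hmeq, hMP, Matrix.trace_fin_two_of]; ring
end
end
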